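/- arXiv:2108.11058 — 3 statements merged into one kernel-verified Lean document; each statement's English description precedes it below -/
import Mathlib

section
/- Let {f_t}_{t∈[0,1]} be a continuous full family of C¹ unimodal maps and let V be a periodic point component of G_n^{−1}(0) whose period is n. If k = min{ per(x) : (t,x) ∈ V } is smaller than n, then k = n/2. -/
/-- A `C¹` unimodal map: `f' > 0` on `(-∞,0)`, `f' < 0` on `(0,∞)`, `f' 0 = 0`. -/
def Unimodal (f : ℝ → ℝ) : Prop :=
  ContDiff ℝ 1 f ∧ (∀ x < (0 : ℝ), 0 < deriv f x) ∧
    (∀ x > (0 : ℝ), deriv f x < 0) ∧ deriv f 0 = 0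

/-- A `C¹` unimodal map is a horseshoe: it has exactly two fixed points, the left
one being `a`, and there are `a < a₁ < b₁ < b` with `f b = a`, `f a₁ = f b₁ = b`
and `|f'| > 1` on `[a,a₁] ∪ [b₁,b]`. -/
def Horseshoe (f : ℝ → ℝ) : Prop :=
  Unimodal f ∧ ∃ a c : ℝ, a < c ∧ {x : ℝ | f x = x} = {a, c} ∧
    ∃ a₁ b₁ b : ℝ, a < a₁ ∧ a₁ < b₁ ∧ b₁ < b ∧ f b = a ∧ f a₁ = b ∧ f b₁ = b ∧
      ∀ x ∈ Set.Icc a a₁ ∪ Set.Icc b₁ b, 1 < |deriv f x|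

/-- A continuous full family of `C¹` unimodal maps `f t`, `t ∈ [0,1]`:
`(t,x) ↦ f t x` and `(t,x) ↦ (f t)' x` are continuous on `[0,1] × ℝ`, each `f t`
is unimodal, `f 0` has no fixed point, `f 1` is a horseshoe, and there is `M > 0`
such that all fixed points of every `f t` lie in `[-M, M]`. -/
def ContFullFamily (f : ℝ → ℝ → ℝ) : Prop :=
  (∀ t ∈ Set.Icc (0 : ℝ) 1, Unimodal (f t)) ∧
  ContinuousOn (fun p : ℝ × ℝ => f p.1 p.2) (Set.Icc (0 : ℝ) 1 ×ˢ Set.univ) ∧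
  ContinuousOn (fun p : ℝ × ℝ => deriv (f p.1) p.2) (Set.Icc (0 : ℝ) 1 ×ˢ Set.univ) ∧
  (∀ x : ℝ, f 0 x ≠ x) ∧
  Horseshoe (f 1) ∧
  (∃ M > (0 : ℝ), ∀ t ∈ Set.Icc (0 : ℝ) 1, ∀ x : ℝ, f t x = x → x ∈ Set.Icc (-M) M)

open scoped Classical in
/-- The quotient map `G_m` of the family: for odd `m`, `G_m (t,x) = f_t^m x - x`;
for even `m = 2n`, it is `(f_t^{2n} x - x)/(f_t^n x - x)` off the fixed-point set
of `f_t^n`, and `(f_t^n)' x + 1` on it. -/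
noncomputable def Gmap (f : ℝ → ℝ → ℝ) (m : ℕ) (t x : ℝ) : ℝ :=
  if Odd m then (f t)^[m] x - x
  else if (f t)^[m / 2] x = x then deriv ((f t)^[m / 2]) x + 1
  else ((f t)^[m] x - x) / ((f t)^[m / 2] x - x)

/-- The zero set `G_m⁻¹(0) ⊆ [0,1] × ℝ`. -/
def Zset (f : ℝ → ℝ → ℝ) (m : ℕ) : Set (ℝ × ℝ) :=
  {p : ℝ × ℝ | p.1 ∈ Set.Icc (0 : ℝ) 1 ∧ Gmap f m p.1 p.2 = 0}

/-- `V` is a periodic point component of period-`m` data: a connected component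
of `G_m⁻¹(0)`. -/
def IsPPComponent (f : ℝ → ℝ → ℝ) (m : ℕ) (V : Set (ℝ × ℝ)) : Prop :=
  ∃ p ∈ Zset f m, V = connectedComponentIn (Zset f m) p

/-- The period of a periodic point component `V` is `n`: the maximum of the
minimal periods of its points is `n`. -/
def CompPeriod (f : ℝ → ℝ → ℝ) (V : Set (ℝ × ℝ)) (n : ℕ) : Prop :=
  (∀ p ∈ V, Function.minimalPeriod (f p.1) p.2 ≤ n) ∧
  (∃ p ∈ V, Function.minimalPeriod (f p.1) p.2 = n)

open Function Set Metric Filter Topology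

lemma derivIterFixed {g : ℝ → ℝ} (hg : Differentiable ℝ g) {x : ℝ} (hx : g x = x) (q : ℕ) :
    deriv (g^[q]) x = (deriv g x) ^ q := by
  induction q with
  | zero => simp
  | succ q ih =>
    rw [Function.iterate_succ', deriv_comp _ hg.differentiableAt (hg.iterate q).differentiableAt,
      Function.iterate_fixed hx, ih, pow_succ]
    ring

section family
variable {f : ℝ → ℝ → ℝ}

/-- joint continuity of iterates -/
lemma iterCont (hC : ContinuousOn (fun p : ℝ × ℝ => f p.1 p.2) (Set.Icc (0:ℝ) 1 ×ˢ Set.univ))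
    (s : ℕ) :
    ContinuousOn (fun p : ℝ × ℝ => (f p.1)^[s] p.2) (Set.Icc (0:ℝ) 1 ×ˢ Set.univ) := by
  induction s with
  | zero => simpa using (continuous_snd.continuousOn)
  | succ s ih =>
    have : ∀ p : ℝ × ℝ, (f p.1)^[s+1] p.2 = f p.1 ((f p.1)^[s] p.2) := fun p =>
      Function.iterate_succ_apply' _ _ _
    simp only [this]
    exact hC.comp (continuousOn_fst.prodMk ih)
      (fun p hp => ⟨hp.1, Set.mem_univ _⟩)

/-- joint continuity of derivatives of iterates -/
lemma derivIterCont
    (hdiff : ∀ t ∈ Set.Icc (0:ℝ) 1, Differentiable ℝ (f t))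
    (hC : ContinuousOn (fun p : ℝ × ℝ => f p.1 p.2) (Set.Icc (0:ℝ) 1 ×ˢ Set.univ))
    (hD : ContinuousOn (fun p : ℝ × ℝ => deriv (f p.1) p.2) (Set.Icc (0:ℝ) 1 ×ˢ Set.univ))
    (s : ℕ) :
    ContinuousOn (fun p : ℝ × ℝ => deriv ((f p.1)^[s]) p.2) (Set.Icc (0:ℝ) 1 ×ˢ Set.univ) := by
  induction s with
  | zero => simpa using continuousOn_const
  | succ s ih =>
    have key : ∀ p ∈ (Set.Icc (0:ℝ) 1 ×ˢ (Set.univ : Set ℝ)),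
        deriv ((f p.1)^[s+1]) p.2
          = deriv (f p.1) ((f p.1)^[s] p.2) * deriv ((f p.1)^[s]) p.2 := by
      intro p hp
      rw [Function.iterate_succ']
      exact deriv_comp _ ((hdiff p.1 hp.1).differentiableAt)
        (((hdiff p.1 hp.1).iterate s).differentiableAt)
    refine ContinuousOn.congr ?_ key
    exact (hD.comp (continuousOn_fst.prodMk (iterCont hC s))
      (fun p hp => ⟨hp.1, Set.mem_univ _⟩)).mul ih

end family

/-- monotone orbit lemma -/
lemma monoOrbit {g : ℝ → ℝ} {S : Set ℝ} (hg : StrictMonoOn g S) {m : ℕ} (hm : 1 ≤ m)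
    {x : ℝ} (horb : ∀ i ≤ m, g^[i] x ∈ S) (hx : g^[m] x = x) : g x = x := by
  rcases lt_trichotomy (g x) x with h | h | h
  · -- g x < x : orbit strictly decreasing
    have key : ∀ i, 1 ≤ i → i ≤ m → g^[i] x < x := by
      intro i hi1 him
      induction i with
      | zero => omega
      | succ i ih =>
        rcases Nat.eq_or_lt_of_le hi1 with h1 | h1
        · simpa [← h1] using h
        · have hi : 1 ≤ i := by omega
          have him' : i ≤ m := by omega
          have := ih hi him'
          have hlt : g (g^[i] x) < g x := hg (horb i him') (horb 0 (by omega)) this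
          rw [Function.iterate_succ_apply']
          exact hlt.trans h
    have := key m hm le_rfl
    rw [hx] at this; exact absurd this (lt_irrefl _)
  · exact h
  · have key : ∀ i, 1 ≤ i → i ≤ m → x < g^[i] x := by
      intro i hi1 him
      induction i with
      | zero => omega
      | succ i ih =>
        rcases Nat.eq_or_lt_of_le hi1 with h1 | h1
        · simpa [← h1] using h
        · have hi : 1 ≤ i := by omega
          have him' : i ≤ m := by omega
          have := ih hi him'
          have hlt : g x < g (g^[i] x) := hg (horb 0 (by omega)) (horb i him') this
          rw [Function.iterate_succ_apply']
          exact h.trans hlt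
    have := key m hm le_rfl
    rw [hx] at this; exact absurd this (lt_irrefl _)

lemma withinNhds {φ : ℝ×ℝ → ℝ} {S : Set (ℝ×ℝ)} {p₀ : ℝ×ℝ} (hφ : ContinuousOn φ S)
    (hp : p₀ ∈ S) {A : Set ℝ} (hA : A ∈ 𝓝 (φ p₀)) :
    ∃ U ∈ 𝓝 p₀, ∀ q ∈ U, q ∈ S → φ q ∈ A := by
  have h2 := (hφ p₀ hp).preimage_mem_nhdsWithin hA
  rcases mem_nhdsWithin.1 h2 with ⟨u, hu, hpu, hsub⟩
  exact ⟨u, hu.mem_nhds hpu, fun q hq hqS => hsub ⟨hq, hqS⟩⟩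

lemma prodBall {U : Set (ℝ×ℝ)} {a b : ℝ} (hU : U ∈ 𝓝 (a,b)) :
    ∃ T ∈ 𝓝 a, ∃ r > (0:ℝ), T ×ˢ closedBall b r ⊆ U := by
  rcases mem_nhds_prod_iff.1 hU with ⟨T, hT, W, hW, hsub⟩
  rcases Metric.nhds_basis_closedBall.mem_iff.1 hW with ⟨r, hr, hrW⟩
  exact ⟨T, hT, r, hr, fun q hq => hsub ⟨hq.1, hrW hq.2⟩⟩

section family
variable {f : ℝ → ℝ → ℝ}

lemma keyLocal
    (hdiff : ∀ t ∈ Set.Icc (0:ℝ) 1, Differentiable ℝ (f t))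
    (hC : ContinuousOn (fun p : ℝ × ℝ => f p.1 p.2) (Set.Icc (0:ℝ) 1 ×ˢ Set.univ))
    (hD : ContinuousOn (fun p : ℝ × ℝ => deriv (f p.1) p.2) (Set.Icc (0:ℝ) 1 ×ˢ Set.univ))
    {t₀ x₀ : ℝ} (ht₀ : t₀ ∈ Set.Icc (0:ℝ) 1) {s m : ℕ} (hs : 1 ≤ s) (hm : 1 ≤ m)
    (hfix : (f t₀)^[s] x₀ = x₀) :
    ∃ U ∈ 𝓝 ((t₀, x₀) : ℝ × ℝ), ∀ q ∈ U, q.1 ∈ Set.Icc (0:ℝ) 1 →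
      (f q.1)^[s * m] q.2 = q.2 → (f q.1)^[2 * s] q.2 = q.2 := by
  set S : Set (ℝ × ℝ) := Set.Icc (0:ℝ) 1 ×ˢ Set.univ with hS
  have hp₀S : ((t₀, x₀) : ℝ × ℝ) ∈ S := ⟨ht₀, Set.mem_univ _⟩
  set ν : ℝ := deriv ((f t₀)^[s]) x₀ with hν
  by_cases h1 : |ν| < 1
  · -- contraction case
    set c : ℝ := (|ν| + 1) / 2 with hc
    have hc0 : 0 ≤ c := by positivity
    have hc1 : c < 1 := by simp only [hc]; linarith
    have hcν : |ν| < c := by simp only [hc]; linarith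
    -- derivative bound neighborhood
    obtain ⟨U₁, hU₁, hU₁P⟩ := withinNhds (derivIterCont hdiff hC hD s) hp₀S
      (A := {y : ℝ | |y| < c}) (by
        have : IsOpen {y : ℝ | |y| < c} := isOpen_lt (continuous_abs) continuous_const
        exact this.mem_nhds hcν)
    obtain ⟨T₁, hT₁, r, hr, hTr⟩ := prodBall hU₁
    -- g x₀ close to x₀
    have hφ₀ : ContinuousOn (fun q : ℝ × ℝ => (f q.1)^[s] x₀) S :=
      (iterCont hC s).comp (continuousOn_fst.prodMk continuousOn_const)
        (fun q (hq : q ∈ S) => ⟨hq.1, Set.mem_univ _⟩)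
    obtain ⟨U₂, hU₂, hU₂P⟩ := withinNhds hφ₀ hp₀S (A := {y : ℝ | |y - x₀| < (1 - c) * r}) (by
      have ho : IsOpen {y : ℝ | |y - x₀| < (1 - c) * r} :=
        isOpen_lt (by fun_prop) continuous_const
      refine ho.mem_nhds ?_
      simp only [Set.mem_setOf_eq, hfix, sub_self, abs_zero]
      nlinarith)
    refine ⟨(T₁ ×ˢ closedBall x₀ r) ∩ U₂,
      Filter.inter_mem (prod_mem_nhds hT₁ (closedBall_mem_nhds _ hr)) hU₂, ?_⟩
    rintro ⟨t, x⟩ ⟨⟨hqT, hqB⟩, hqU₂⟩ hqIcc hfixm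
    set g : ℝ → ℝ := (f t)^[s] with hg
    have hqS : ((t, x) : ℝ × ℝ) ∈ S := ⟨hqIcc, Set.mem_univ _⟩
    have gdiff : Differentiable ℝ g := (hdiff t hqIcc).iterate s
    have hderiv : ∀ y ∈ closedBall x₀ r, |deriv g y| ≤ c := by
      intro y hy
      have : ((t, y) : ℝ × ℝ) ∈ U₁ := hTr ⟨hqT, hy⟩
      exact le_of_lt (hU₁P _ this ⟨hqIcc, Set.mem_univ _⟩)
    have hLip : ∀ y ∈ closedBall x₀ r, ∀ z ∈ closedBall x₀ r, |g y - g z| ≤ c * |y - z| := by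
      intro y hy z hz
      have := Convex.norm_image_sub_le_of_norm_deriv_le (f := g)
        (fun w _ => gdiff.differentiableAt) (fun w hw => by
          simpa [Real.norm_eq_abs] using hderiv w hw)
        (convex_closedBall x₀ r) hz hy
      simpa [Real.norm_eq_abs] using this
    have hgx₀ : |g x₀ - x₀| ≤ (1 - c) * r :=
      le_of_lt (hU₂P _ hqU₂ hqS)
    have maps : Set.MapsTo g (closedBall x₀ r) (closedBall x₀ r) := by
      intro y hy
      rw [Metric.mem_closedBall, Real.dist_eq]
      have h2 := hLip y hy x₀ (Metric.mem_closedBall_self hr.le)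
      have h3 : |y - x₀| ≤ r := by
        rw [← Real.dist_eq]; exact hy
      calc |g y - x₀| ≤ |g y - g x₀| + |g x₀ - x₀| := abs_sub_le _ _ _
        _ ≤ c * |y - x₀| + (1 - c) * r := add_le_add h2 hgx₀
        _ ≤ c * r + (1 - c) * r := by nlinarith
        _ = r := by ring
    have hgm : g^[m] x = x := by
      rw [hg, ← Function.iterate_mul]; exact hfixm
    set y : ℝ := g x with hy
    have hyB : y ∈ closedBall x₀ r := maps hqB
    have hgmy : g^[m] y = y := by
      rw [hy, ← Function.iterate_succ_apply, Function.iterate_succ_apply', hgm]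
    have contract : ∀ i : ℕ, |g^[i] x - g^[i] y| ≤ c ^ i * |x - y| := by
      intro i
      induction i with
      | zero => simp
      | succ i ih =>
        have hxB : g^[i] x ∈ closedBall x₀ r := maps.iterate i hqB
        have hyB' : g^[i] y ∈ closedBall x₀ r := maps.iterate i hyB
        calc |g^[i+1] x - g^[i+1] y| = |g (g^[i] x) - g (g^[i] y)| := by
              rw [Function.iterate_succ_apply', Function.iterate_succ_apply']
          _ ≤ c * |g^[i] x - g^[i] y| := hLip _ hxB _ hyB'
          _ ≤ c * (c ^ i * |x - y|) := by nlinarith [abs_nonneg (g^[i] x - g^[i] y)]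
          _ = c ^ (i+1) * |x - y| := by ring
    have hxy : x = y := by
      by_contra hne
      have h0 : 0 < |x - y| := abs_pos.2 (sub_ne_zero.2 hne)
      have := contract m
      rw [hgm, hgmy] at this
      have hcm : c ^ m < 1 := pow_lt_one₀ hc0 hc1 (by omega)
      nlinarith
    have hgxx : g x = x := by rw [← hy, ← hxy]
    show (f t)^[2 * s] x = x
    rw [two_mul, Function.iterate_add_apply]
    rw [← hg] at *
    rw [hgxx, hgxx]
  · -- monotone (increasing) case
    have hw : deriv ((f t₀)^[2 * s]) x₀ = ν ^ 2 := by
      rw [mul_comm, Function.iterate_mul]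
      exact derivIterFixed ((hdiff t₀ ht₀).iterate s) hfix 2
    have hwpos : 0 < deriv ((f t₀)^[2 * s]) x₀ := by
      rw [hw]
      push_neg at h1
      nlinarith [sq_abs ν]
    obtain ⟨U₁, hU₁, hU₁P⟩ := withinNhds (derivIterCont hdiff hC hD (2 * s)) hp₀S
      (A := {y : ℝ | 0 < y}) ((isOpen_lt continuous_const continuous_id).mem_nhds hwpos)
    obtain ⟨T₁, hT₁, r, hr, hTr⟩ := prodBall hU₁
    have hI : ∀ i : ℕ, ∃ Ui ∈ 𝓝 ((t₀, x₀) : ℝ × ℝ), ∀ q ∈ Ui, q ∈ S →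
        (f q.1)^[2 * s * i] q.2 ∈ ball x₀ r := by
      intro i
      refine withinNhds (iterCont hC (2 * s * i)) hp₀S (A := ball x₀ r) ?_
      have : (f t₀)^[2 * s * i] x₀ = x₀ := by
        rw [mul_comm 2 s, mul_assoc, Function.iterate_mul]
        exact Function.iterate_fixed hfix _
      rw [this]
      exact ball_mem_nhds _ hr
    choose Ui hUi hUiP using hI
    refine ⟨(T₁ ×ˢ closedBall x₀ r) ∩ ⋂ i ∈ Finset.range (m + 1), Ui i,
      Filter.inter_mem (prod_mem_nhds hT₁ (closedBall_mem_nhds _ hr))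
        ((Filter.biInter_finset_mem _).2 fun i _ => hUi i), ?_⟩
    rintro ⟨t, x⟩ ⟨⟨hqT, _⟩, hqI⟩ hqIcc hfixm
    have hqS : ((t, x) : ℝ × ℝ) ∈ S := ⟨hqIcc, Set.mem_univ _⟩
    set h : ℝ → ℝ := (f t)^[2 * s] with hh
    have hmono : StrictMonoOn h (ball x₀ r) := by
      refine strictMonoOn_of_deriv_pos (convex_ball x₀ r)
        (((hdiff t hqIcc).iterate (2 * s)).continuous.continuousOn) ?_
      intro y hy
      rw [isOpen_ball.interior_eq] at hy
      have : ((t, y) : ℝ × ℝ) ∈ U₁ := hTr ⟨hqT, ball_subset_closedBall hy⟩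
      exact hU₁P _ this ⟨hqIcc, Set.mem_univ _⟩
    have horb : ∀ i ≤ m, h^[i] x ∈ ball x₀ r := by
      intro i him
      have hmem : ((t, x) : ℝ × ℝ) ∈ Ui i := by
        have := hqI
        simp only [Set.mem_iInter] at this
        exact this i (Finset.mem_range.2 (by omega))
      have := hUiP i _ hmem hqS
      rwa [Function.iterate_mul] at this
    have hxm : h^[m] x = x := by
      rw [hh, ← Function.iterate_mul]
      have : 2 * s * m = s * m + s * m := by ring
      rw [this, Function.iterate_add_apply, hfixm, hfixm]
    exact monoOrbit hmono hm horb hxm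

end family

section zfacts
variable {f : ℝ → ℝ → ℝ}

lemma perDvdAux {n : ℕ} {p : ℝ × ℝ} (hz : p ∈ Zset f n) :
    (f p.1)^[n] p.2 = p.2 := by
  obtain ⟨ht, hG⟩ := hz
  by_cases ho : Odd n
  · rw [Gmap, if_pos ho] at hG
    exact sub_eq_zero.1 hG
  · by_cases hfix : (f p.1)^[n / 2] p.2 = p.2
    · obtain ⟨c, hc⟩ := Nat.not_odd_iff_even.1 ho
      have hc2 : n / 2 = c := by omega
      rw [hc2] at hfix
      rw [hc, Function.iterate_add_apply, hfix, hfix]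
    · rw [Gmap, if_neg ho, if_neg hfix] at hG
      rcases div_eq_zero_iff.1 hG with h | h
      · exact sub_eq_zero.1 h
      · exact absurd (sub_eq_zero.1 h) hfix

lemma oddHalf {n : ℕ} {p : ℝ × ℝ} (hz : p ∈ Zset f n) (hno : ¬ Odd n)
    (hdiff : Differentiable ℝ (f p.1)) {j : ℕ} (hj : 0 < j)
    (hjfix : (f p.1)^[j] p.2 = p.2) (hdvd : j ∣ n / 2) :
    Odd ((n / 2) / j) := by
  obtain ⟨ht, hG⟩ := hz
  obtain ⟨q, hq⟩ := hdvd
  have hfix : (f p.1)^[n / 2] p.2 = p.2 := by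
    rw [hq, Function.iterate_mul]
    exact Function.iterate_fixed hjfix q
  rw [Gmap, if_neg hno, if_pos hfix] at hG
  have hder : deriv ((f p.1)^[n / 2]) p.2 = -1 := by linarith
  rw [hq, Function.iterate_mul] at hder
  rw [derivIterFixed (hdiff.iterate j) hjfix q] at hder
  have hqodd : Odd q := by
    by_contra hodd
    have := Even.pow_nonneg (Nat.not_odd_iff_even.1 hodd) (deriv ((f p.1)^[j]) p.2)
    rw [hder] at this
    linarith
  rw [hq, Nat.mul_div_cancel_left q hj]
  exact hqodd

lemma boundaryStep
    (hdiff : ∀ t ∈ Set.Icc (0:ℝ) 1, Differentiable ℝ (f t))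
    (hC : ContinuousOn (fun p : ℝ × ℝ => f p.1 p.2) (Set.Icc (0:ℝ) 1 ×ˢ Set.univ))
    (hD : ContinuousOn (fun p : ℝ × ℝ => deriv (f p.1) p.2) (Set.Icc (0:ℝ) 1 ×ˢ Set.univ))
    {n : ℕ} (hn : 0 < n) {V : Set (ℝ × ℝ)}
    (hVsub : V ⊆ Set.Icc (0:ℝ) 1 ×ˢ Set.univ) (hVconn : IsPreconnected V)
    (hVper : ∀ p ∈ V, (f p.1)^[n] p.2 = p.2)
    {s : ℕ} (hs : 1 ≤ s) (hsn : s ∣ n)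
    (hne : ∃ p ∈ V, (f p.1)^[s] p.2 = p.2)
    (hproper : ∃ p ∈ V, ¬ (f p.1)^[s] p.2 = p.2) :
    ∃ p ∈ V, (f p.1)^[2 * s] p.2 = p.2 ∧ ¬ (f p.1)^[s] p.2 = p.2 := by
  classical
  set S : Set (ℝ × ℝ) := Set.Icc (0:ℝ) 1 ×ˢ Set.univ with hSdef
  set C : Set (ℝ × ℝ) := S ∩ (fun q : ℝ × ℝ => (f q.1)^[s] q.2 - q.2) ⁻¹' {0} with hCdef
  have hCclosed : IsClosed C :=
    ContinuousOn.preimage_isClosed_of_isClosed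
      ((iterCont hC s).sub continuous_snd.continuousOn)
      (isClosed_Icc.prod isClosed_univ) isClosed_singleton
  have hCmem : ∀ p ∈ V, (p ∈ C ↔ (f p.1)^[s] p.2 = p.2) := by
    intro p hp
    constructor
    · intro h
      have := h.2
      simp only [Set.mem_preimage, Set.mem_singleton_iff] at this
      exact sub_eq_zero.1 this
    · intro h
      exact ⟨hVsub hp, by simp [h]⟩
  set B := V ∩ C with hBdef
  have hex : ∃ p₀, p₀ ∈ B ∧ p₀ ∈ closure (V \ B) := by
    by_contra hcon
    push_neg at hcon
    obtain ⟨p₁, hp₁V, hp₁⟩ := hne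
    obtain ⟨p₂, hp₂V, hp₂⟩ := hproper
    have hVuv : V ⊆ (closure (V \ B))ᶜ ∪ Cᶜ := by
      intro p hp
      by_cases hpC : p ∈ C
      · exact Or.inl (hcon p ⟨hp, hpC⟩)
      · exact Or.inr hpC
    obtain ⟨z, hzV, hz1, hz2⟩ := hVconn _ _ isClosed_closure.isOpen_compl
      hCclosed.isOpen_compl hVuv
      ⟨p₁, hp₁V, hcon p₁ ⟨hp₁V, (hCmem p₁ hp₁V).2 hp₁⟩⟩
      ⟨p₂, hp₂V, fun h => hp₂ ((hCmem p₂ hp₂V).1 h)⟩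
    have hzVB : z ∈ V \ B := ⟨hzV, fun h => hz2 h.2⟩
    exact hz1 (subset_closure hzVB)
  obtain ⟨p₀, hp₀B, hp₀cl⟩ := hex
  obtain ⟨hp₀V, hp₀C⟩ := hp₀B
  have ht₀ : p₀.1 ∈ Set.Icc (0:ℝ) 1 := (hVsub hp₀V).1
  have hfix : (f p₀.1)^[s] p₀.2 = p₀.2 := (hCmem p₀ hp₀V).1 hp₀C
  have hm : 1 ≤ n / s := Nat.div_pos (Nat.le_of_dvd hn hsn) hs
  obtain ⟨U, hU, hUP⟩ := keyLocal hdiff hC hD ht₀ hs hm hfix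
  rw [mem_closure_iff_nhds] at hp₀cl
  obtain ⟨q, hqU, hqV, hqB⟩ := hp₀cl U hU
  have hqIcc : q.1 ∈ Set.Icc (0:ℝ) 1 := (hVsub hqV).1
  have hqn : (f q.1)^[s * (n / s)] q.2 = q.2 := by
    rw [Nat.mul_div_cancel' hsn]
    exact hVper q hqV
  have hq2s : (f q.1)^[2 * s] q.2 = q.2 := hUP q hqU hqIcc hqn
  have hqns : ¬ (f q.1)^[s] q.2 = q.2 := by
    intro h
    exact hqB ⟨hqV, (hCmem q hqV).2 h⟩
  exact ⟨q, hqV, hq2s, hqns⟩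

end zfacts

/-- Let `V` be a periodic point component of `G_n⁻¹(0)` of period `n`.
If `k = min { per x | (t,x) ∈ V }` is smaller than `n`, then `k = n/2`. -/
theorem stmt9 (f : ℝ → ℝ → ℝ) (hf : ContFullFamily f) (n : ℕ) (hn : 0 < n)
    (V : Set (ℝ × ℝ)) (hV : IsPPComponent f n V) (hVper : CompPeriod f V n)
    (k : ℕ)
    (hk : IsLeast {j : ℕ | ∃ p ∈ V, Function.minimalPeriod (f p.1) p.2 = j} k)
    (hkn : k < n) :
    2 * k = n := by
  obtain ⟨hUni, hC, hD, -, -, -⟩ := hf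
  have hdiff : ∀ t ∈ Set.Icc (0:ℝ) 1, Differentiable ℝ (f t) := fun t ht =>
    (hUni t ht).1.differentiable one_ne_zero
  obtain ⟨pz, hpz, hVeq⟩ := hV
  have hVsub : V ⊆ Zset f n := hVeq ▸ connectedComponentIn_subset _ _
  have hVS : V ⊆ Set.Icc (0:ℝ) 1 ×ˢ Set.univ := fun p hp =>
    ⟨(hVsub hp).1, Set.mem_univ _⟩
  have hVconn : IsPreconnected V := hVeq ▸ isPreconnected_connectedComponentIn
  have hper : ∀ p ∈ V, (f p.1)^[n] p.2 = p.2 := fun p hp => perDvdAux (hVsub hp)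
  have hperP : ∀ p ∈ V, Function.IsPeriodicPt (f p.1) n p.2 := fun p hp => hper p hp
  obtain ⟨q, hqV, hqk⟩ := hk.1
  have kpos : 0 < k := by
    rw [← hqk]; exact (hperP q hqV).minimalPeriod_pos hn
  have kdvd : k ∣ n := hqk ▸ (hperP q hqV).minimalPeriod_dvd
  obtain ⟨pn, hpnV, hpn⟩ := hVper.2
  -- Step 1 : produce a point of minimal period 2k
  have hqfix : (f q.1)^[k] q.2 = q.2 := by
    rw [← hqk]; exact Function.isPeriodicPt_minimalPeriod _ _
  have hpnproper : ¬ (f pn.1)^[k] pn.2 = pn.2 := by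
    intro h
    have hd : n ∣ k := hpn ▸ Function.IsPeriodicPt.minimalPeriod_dvd h
    have := Nat.le_of_dvd kpos hd
    omega
  obtain ⟨p', hp'V, hp'fix, hp'nfix⟩ := boundaryStep hdiff hC hD hn hVS hVconn hper
    kpos kdvd ⟨q, hqV, hqfix⟩ ⟨pn, hpnV, hpnproper⟩
  set j' := Function.minimalPeriod (f p'.1) p'.2 with hj'def
  have hj'1 : j' ∣ 2 * k := Function.IsPeriodicPt.minimalPeriod_dvd hp'fix
  have hj'2 : ¬ j' ∣ k := by
    intro hd
    exact hp'nfix ((Function.isPeriodicPt_minimalPeriod _ _).trans_dvd hd)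
  have hj'3 : k ≤ j' := hk.2 ⟨p', hp'V, rfl⟩
  have hj'eq : j' = 2 * k := by
    obtain ⟨a, ha⟩ := hj'1
    have ha0 : a ≠ 0 := by rintro rfl; omega
    rcases Nat.lt_or_ge a 2 with h2 | h2
    · have ha1 : a = 1 := by omega
      rw [ha1, mul_one] at ha
      omega
    · have hle : j' * 2 ≤ j' * a := Nat.mul_le_mul_left _ h2
      rw [← ha] at hle
      have : j' = k := by omega
      rw [this] at hj'2
      exact absurd dvd_rfl hj'2
  have h2kdvd : 2 * k ∣ n := hj'eq ▸ (hperP p' hp'V).minimalPeriod_dvd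
  -- now suppose 2k ≠ n and derive a contradiction
  by_contra hfin
  have h2n : 2 ∣ n := dvd_trans ⟨k, rfl⟩ h2kdvd
  have hno : ¬ Odd n := by
    rw [Nat.odd_iff]
    omega
  obtain ⟨a, han⟩ := id h2kdvd
  have ha1 : a ≠ 1 := by
    rintro rfl
    rw [mul_one] at han
    exact hfin han.symm
  have ha0 : a ≠ 0 := by rintro rfl; omega
  have hn2' : n = 2 * (k * a) := by rw [han]; ring
  have hn2 : n / 2 = k * a := by rw [hn2']; exact Nat.mul_div_cancel_left _ (by norm_num)
  have hkdvd2 : k ∣ n / 2 := ⟨a, hn2⟩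
  have hodda : Odd a := by
    have := oddHalf (hVsub hqV) hno (hdiff q.1 (hVS hqV).1) kpos hqfix hkdvd2
    rwa [hn2, Nat.mul_div_cancel_left _ kpos] at this
  have ha3 : 3 ≤ a := by
    rw [Nat.odd_iff] at hodda
    omega
  -- Step 2 with s = 2k
  have hpnproper2 : ¬ (f pn.1)^[2 * k] pn.2 = pn.2 := by
    intro h
    have hd : n ∣ 2 * k := hpn ▸ Function.IsPeriodicPt.minimalPeriod_dvd h
    have h1 := Nat.le_of_dvd (by omega) hd
    have h2 : 2 * k * 3 ≤ 2 * k * a := Nat.mul_le_mul_left _ ha3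
    rw [← han] at h2
    omega
  obtain ⟨p'', hp''V, hp''fix, hp''nfix⟩ := boundaryStep hdiff hC hD hn hVS hVconn hper
    (by omega : 1 ≤ 2 * k) h2kdvd ⟨p', hp'V, hp'fix⟩ ⟨pn, hpnV, hpnproper2⟩
  set j'' := Function.minimalPeriod (f p''.1) p''.2 with hj''def
  have hj1 : j'' ∣ 2 * k * 2 := by
    have := Function.IsPeriodicPt.minimalPeriod_dvd hp''fix
    have he : 2 * (2 * k) = 2 * k * 2 := by ring
    rwa [he] at this
  have hj2 : ¬ j'' ∣ 2 * k := by
    intro hd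
    exact hp''nfix ((Function.isPeriodicPt_minimalPeriod _ _).trans_dvd hd)
  have hj3 : j'' ∣ 2 * k * a := han ▸ (hperP p'' hp''V).minimalPeriod_dvd
  have hcop : Nat.gcd 2 a = 1 := by
    have : ¬ 2 ∣ a := by
      rw [Nat.odd_iff] at hodda
      omega
    exact (Nat.Prime.coprime_iff_not_dvd Nat.prime_two).2 this
  have hgcd : Nat.gcd (2 * k * 2) (2 * k * a) = 2 * k := by
    rw [Nat.gcd_mul_left, hcop, mul_one]
  have : j'' ∣ 2 * k := hgcd ▸ Nat.dvd_gcd hj1 hj3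
  exact hj2 this
end

section
/- Let {f_t}_{t∈[0,1]} be a continuous full family of C¹ unimodal maps and let V be a periodic point component of G_n^{−1}(0) of period n. If V ∩ ({1} × ℝ) ≠ ∅, then V ∩ ({1} × ℝ) contains at least two points. -/
namespace S11

open Set Filter Function

noncomputable def Box : Set (ℝ × ℝ) := Set.Icc (0:ℝ) 1 ×ˢ (Set.univ : Set ℝ)

variable {f : ℝ → ℝ → ℝ} {n : ℕ}

lemma mem_box {p : ℝ × ℝ} (h : p.1 ∈ Set.Icc (0:ℝ) 1) : p ∈ Box := ⟨h, trivial⟩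

lemma uni (hf : ContFullFamily f) {t : ℝ} (ht : t ∈ Set.Icc (0:ℝ) 1) : Unimodal (f t) :=
  hf.1 t ht

lemma uniCont {g : ℝ → ℝ} (h : Unimodal g) : Continuous g := h.1.continuous

lemma uniDiff {g : ℝ → ℝ} (h : Unimodal g) : Differentiable ℝ g :=
  h.1.differentiable one_ne_zero

lemma uniMono {g : ℝ → ℝ} (h : Unimodal g) : MonotoneOn g (Set.Iic 0) := by
  have := strictMonoOn_of_deriv_pos (convex_Iic (0:ℝ)) (uniCont h).continuousOn
    (fun x hx => h.2.1 x (by simpa [interior_Iic] using hx))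
  exact this.monotoneOn

lemma uniAnti {g : ℝ → ℝ} (h : Unimodal g) : AntitoneOn g (Set.Ici 0) := by
  have := strictAntiOn_of_deriv_neg (convex_Ici (0:ℝ)) (uniCont h).continuousOn
    (fun x hx => h.2.2.1 x (by simpa [interior_Ici] using hx))
  exact this.antitoneOn

lemma uniMax {g : ℝ → ℝ} (h : Unimodal g) (x : ℝ) : g x ≤ g 0 := by
  rcases le_total x 0 with hx | hx
  · exact (uniMono h) hx Set.self_mem_Iic hx
  · exact (uniAnti h) Set.self_mem_Ici hx hx

/-- Joint continuity of iterates. -/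
lemma contIter (hf : ContFullFamily f) (k : ℕ) :
    ContinuousOn (fun p : ℝ × ℝ => (f p.1)^[k] p.2) Box := by
  induction k with
  | zero => simpa using continuousOn_snd
  | succ k ih =>
    have hΦ : ContinuousOn (fun p : ℝ × ℝ => (p.1, f p.1 p.2)) Box :=
      continuousOn_fst.prodMk hf.2.1
    have hmaps : Set.MapsTo (fun p : ℝ × ℝ => (p.1, f p.1 p.2)) Box Box :=
      fun p hp => mem_box hp.1
    have := ih.comp hΦ hmaps
    apply this.congr
    intro p _
    simp [Function.iterate_succ_apply]

lemma hasDerivIter (hf : ContFullFamily f) {t : ℝ} (ht : t ∈ Set.Icc (0:ℝ) 1) (k : ℕ)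
    (x : ℝ) :
    HasDerivAt ((f t)^[k]) (∏ j ∈ Finset.range k, deriv (f t) ((f t)^[j] x)) x := by
  induction k generalizing x with
  | zero => simpa using hasDerivAt_id x
  | succ k ih =>
    have hft : HasDerivAt (f t) (deriv (f t) x) x :=
      ((uniDiff (uni hf ht)) x).hasDerivAt
    have hgk : HasDerivAt ((f t)^[k])
        (∏ j ∈ Finset.range k, deriv (f t) ((f t)^[j] (f t x))) (f t x) := ih (f t x)
    have hcomp := hgk.comp x hft
    have heq : (∏ j ∈ Finset.range (k+1), deriv (f t) ((f t)^[j] x))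
        = (∏ j ∈ Finset.range k, deriv (f t) ((f t)^[j] (f t x))) * deriv (f t) x := by
      rw [Finset.prod_range_succ']
      simp [Function.iterate_succ_apply]
    rw [Function.iterate_succ, heq]
    exact hcomp

lemma derivIter_eq (hf : ContFullFamily f) {t : ℝ} (ht : t ∈ Set.Icc (0:ℝ) 1) (k : ℕ)
    (x : ℝ) :
    deriv ((f t)^[k]) x = ∏ j ∈ Finset.range k, deriv (f t) ((f t)^[j] x) :=
  (hasDerivIter hf ht k x).deriv

lemma diffIter (hf : ContFullFamily f) {t : ℝ} (ht : t ∈ Set.Icc (0:ℝ) 1) (k : ℕ) :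
    Differentiable ℝ ((f t)^[k]) :=
  fun x => (hasDerivIter hf ht k x).differentiableAt

/-- Joint continuity of derivatives of iterates. -/
lemma contDerivIter (hf : ContFullFamily f) (k : ℕ) :
    ContinuousOn (fun p : ℝ × ℝ => deriv ((f p.1)^[k]) p.2) Box := by
  have hprod : ContinuousOn
      (fun p : ℝ × ℝ => ∏ j ∈ Finset.range k, deriv (f p.1) ((f p.1)^[j] p.2)) Box := by
    induction k with
    | zero => simpa using continuousOn_const
    | succ k ih =>
      have hfac : ContinuousOn (fun p : ℝ × ℝ => deriv (f p.1) ((f p.1)^[k] p.2)) Box := by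
        have hin : ContinuousOn (fun p : ℝ × ℝ => (p.1, (f p.1)^[k] p.2)) Box :=
          continuousOn_fst.prodMk (contIter hf k)
        have hmaps : Set.MapsTo (fun p : ℝ × ℝ => (p.1, (f p.1)^[k] p.2)) Box Box :=
          fun p hp => mem_box hp.1
        exact hf.2.2.1.comp hin hmaps
      have := ih.mul hfac
      apply this.congr
      intro p _
      simp [Finset.prod_range_succ]
  apply hprod.congr
  intro p hp
  exact derivIter_eq hf hp.1 k p.2

-- Gmap basics
lemma gmap_odd (ho : Odd n) (t x : ℝ) : Gmap f n t x = (f t)^[n] x - x := if_pos ho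

lemma gmap_even_fix (ho : ¬ Odd n) {t x : ℝ} (hx : (f t)^[n/2] x = x) :
    Gmap f n t x = deriv ((f t)^[n/2]) x + 1 := by
  rw [Gmap, if_neg ho, if_pos hx]

lemma gmap_even_nfix (ho : ¬ Odd n) {t x : ℝ} (hx : (f t)^[n/2] x ≠ x) :
    Gmap f n t x = ((f t)^[n] x - x) / ((f t)^[n/2] x - x) := by
  rw [Gmap, if_neg ho, if_neg hx]

lemma even_half_add (ho : ¬ Odd n) : n / 2 + n / 2 = n := by
  rcases Nat.not_odd_iff_even.mp ho with ⟨m, hm⟩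
  omega

/-- Key representation: in the even case, `Gmap` is a derivative of the half-iterate
at an intermediate point, plus one. -/
lemma gmap_even_rep (hf : ContFullFamily f) (ho : ¬ Odd n) {t : ℝ}
    (ht : t ∈ Set.Icc (0:ℝ) 1) (x : ℝ) :
    ∃ ξ ∈ Set.uIcc x ((f t)^[n/2] x),
      Gmap f n t x = deriv ((f t)^[n/2]) ξ + 1 := by
  set m := n / 2 with hm
  by_cases hx : (f t)^[m] x = x
  · exact ⟨x, Set.left_mem_uIcc, gmap_even_fix ho hx⟩
  · set y := (f t)^[m] x with hy
    have hyx : y - x ≠ 0 := sub_ne_zero.mpr hx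
    have hiter : (f t)^[n] x = (f t)^[m] y := by
      rw [← even_half_add ho, Function.iterate_add_apply]
    have hrep : Gmap f n t x = ((f t)^[m] y - (f t)^[m] x) / (y - x) + 1 := by
      rw [gmap_even_nfix ho hx, hiter, ← hy]
      field_simp
      ring
    have hcont : ∀ a b : ℝ, ContinuousOn ((f t)^[m]) (Set.Icc a b) :=
      fun a b => ((uniCont (uni hf ht)).iterate m).continuousOn
    have hdiff : ∀ a b : ℝ, DifferentiableOn ℝ ((f t)^[m]) (Set.Ioo a b) :=
      fun a b => (diffIter hf ht m).differentiableOn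
    rcases lt_or_gt_of_ne (fun h : x = y => hx h.symm) with hlt | hlt
    · obtain ⟨ξ, hξ, hd⟩ := exists_deriv_eq_slope ((f t)^[m]) hlt (hcont x y) (hdiff x y)
      refine ⟨ξ, ?_, ?_⟩
      · exact Set.Ioo_subset_Icc_self.trans Set.Icc_subset_uIcc hξ
      · rw [hrep, hd]
    · obtain ⟨ξ, hξ, hd⟩ := exists_deriv_eq_slope ((f t)^[m]) hlt (hcont y x) (hdiff y x)
      refine ⟨ξ, ?_, ?_⟩
      · exact Set.Ioo_subset_Icc_self.trans Set.Icc_subset_uIcc' hξ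
      · rw [hrep, hd, ← neg_sub ((f t)^[m] x), ← neg_sub x y, neg_div_neg_eq]
lemma abs_sub_le_of_uIcc {ξ x y c η : ℝ} (hξ : ξ ∈ Set.uIcc x y)
    (hx : |x - c| < η) (hy : |y - c| < η) : |ξ - c| < η := by
  rw [Set.uIcc_eq_union] at hξ
  rcases hξ with h | h <;> rcases abs_sub_lt_iff.mp hx with ⟨hx1, hx2⟩ <;>
    rcases abs_sub_lt_iff.mp hy with ⟨hy1, hy2⟩ <;>
    rcases h with ⟨h1, h2⟩ <;> rw [abs_sub_lt_iff] <;> constructor <;> linarith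

/-- Joint continuity of `Gmap` on the box. -/
lemma contGmap (hf : ContFullFamily f) (n : ℕ) :
    ContinuousOn (fun p : ℝ × ℝ => Gmap f n p.1 p.2) Box := by
  by_cases ho : Odd n
  · have : ContinuousOn (fun p : ℝ × ℝ => (f p.1)^[n] p.2 - p.2) Box :=
      (contIter hf n).sub continuousOn_snd
    exact this.congr fun p _ => gmap_odd ho _ _
  · set m := n / 2 with hm
    intro p₀ hp₀
    by_cases hx₀ : (f p₀.1)^[m] p₀.2 = p₀.2
    · -- derivative branch
      have hval : Gmap f n p₀.1 p₀.2 = deriv ((f p₀.1)^[m]) p₀.2 + 1 :=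
        gmap_even_fix ho hx₀
      rw [ContinuousWithinAt, hval, Metric.tendsto_nhdsWithin_nhds]
      intro ε hε
      have hDm := (contDerivIter hf m) p₀ hp₀
      rw [ContinuousWithinAt, Metric.tendsto_nhdsWithin_nhds] at hDm
      obtain ⟨η, hη, hball⟩ := hDm ε hε
      have hIm := (contIter hf m) p₀ hp₀
      rw [ContinuousWithinAt, Metric.tendsto_nhdsWithin_nhds] at hIm
      obtain ⟨η', hη', hball'⟩ := hIm η hη
      refine ⟨min η η', lt_min hη hη', ?_⟩
      intro p hp hdist
      obtain ⟨ξ, hξ, hrep⟩ := gmap_even_rep hf ho hp.1 p.2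
      rw [hrep]
      have hd1 : dist p.1 p₀.1 < η := by
        have h : dist p.1 p₀.1 ≤ dist p p₀ := by
          rw [Prod.dist_eq]; exact le_max_left _ _
        exact h.trans_lt (hdist.trans_le (min_le_left _ _))
      have hd2 : dist p.2 p₀.2 < η := by
        have h : dist p.2 p₀.2 ≤ dist p p₀ := by
          rw [Prod.dist_eq]; exact le_max_right _ _
        exact h.trans_lt (hdist.trans_le (min_le_left _ _))
      have hIm' : dist ((f p.1)^[m] p.2) p₀.2 < η := by
        have h := hball' hp (hdist.trans_le (min_le_right _ _))
        rwa [hx₀] at h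
      have hξd : dist ξ p₀.2 < η := by
        rw [Real.dist_eq]
        apply abs_sub_le_of_uIcc hξ
        · rw [← Real.dist_eq]; exact hd2
        · rw [← Real.dist_eq]; exact hIm'
      have hmem : ((p.1, ξ) : ℝ × ℝ) ∈ Box := mem_box hp.1
      have hdd : dist ((p.1, ξ) : ℝ × ℝ) p₀ < η := by
        rw [Prod.dist_eq]
        exact max_lt hd1 hξd
      have hfin := hball hmem hdd
      simpa [dist_add_right] using hfin
    · -- ratio branch
      have hden : ContinuousWithinAt (fun p : ℝ × ℝ => (f p.1)^[m] p.2 - p.2) Box p₀ :=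
        ((contIter hf m).sub continuousOn_snd) p₀ hp₀
      have hden0 : (f p₀.1)^[m] p₀.2 - p₀.2 ≠ 0 := sub_ne_zero.mpr hx₀
      have hnum : ContinuousWithinAt (fun p : ℝ × ℝ => (f p.1)^[n] p.2 - p.2) Box p₀ :=
        ((contIter hf n).sub continuousOn_snd) p₀ hp₀
      have hratio := hnum.div hden hden0
      have hev : ∀ᶠ p in nhdsWithin p₀ Box, (f p.1)^[m] p.2 - p.2 ≠ 0 :=
        hden.eventually_ne hden0
      apply hratio.congr_of_eventuallyEq
      · filter_upwards [hev] with p hp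
        rw [gmap_even_nfix ho (fun h => hp (by rw [h, sub_self]))]
        simp [Pi.div_apply]
        rfl
      · rw [gmap_even_nfix ho hx₀]
        simp [Pi.div_apply]
        rfl
lemma zset_eq (f : ℝ → ℝ → ℝ) (n : ℕ) :
    Zset f n = Box ∩ (fun p : ℝ × ℝ => Gmap f n p.1 p.2) ⁻¹' {0} := by
  ext p
  simp [Zset, Box, Set.mem_prod]

lemma isClosed_zset (hf : ContFullFamily f) (n : ℕ) : IsClosed (Zset f n) := by
  rw [zset_eq]
  exact (contGmap hf n).preimage_isClosed_of_isClosed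
    (IsClosed.prod isClosed_Icc isClosed_univ) isClosed_singleton

/-- Every point of the zero set is periodic (with period `n` or `n/2`). -/
lemma zset_periodic (hn : 0 < n) {p : ℝ × ℝ} (hp : p ∈ Zset f n) :
    ∃ k : ℕ, 1 ≤ k ∧ (f p.1)^[k] p.2 = p.2 := by
  obtain ⟨ht, hG⟩ := hp
  by_cases ho : Odd n
  · refine ⟨n, hn, ?_⟩
    have h := gmap_odd (f := f) ho p.1 p.2
    rw [hG] at h
    exact sub_eq_zero.mp h.symm
  · by_cases hx : (f p.1)^[n/2] p.2 = p.2
    · refine ⟨n/2, ?_, hx⟩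
      rcases Nat.not_odd_iff_even.mp ho with ⟨m, hm⟩
      omega
    · refine ⟨n, hn, ?_⟩
      have h := gmap_even_nfix (f := f) ho hx
      rw [hG] at h
      have hden : (f p.1)^[n/2] p.2 - p.2 ≠ 0 := sub_ne_zero.mpr hx
      have := (div_eq_zero_iff.mp h.symm).resolve_right hden
      exact sub_eq_zero.mp this

lemma iterate_pred (g : ℝ → ℝ) (j : ℕ) (hj : 1 ≤ j) (x : ℝ) :
    g^[j] x = g (g^[j-1] x) := by
  conv_lhs => rw [show j = (j-1)+1 by omega]
  rw [Function.iterate_succ_apply']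

/-- Uniform bound for periodic points of the family. -/
lemma periodic_bound (hf : ContFullFamily f) :
    ∃ Lb Cu : ℝ, Lb ≤ Cu ∧ ∀ t ∈ Set.Icc (0:ℝ) 1, ∀ k : ℕ, 1 ≤ k → ∀ x : ℝ,
      (f t)^[k] x = x → x ∈ Set.Icc Lb Cu := by
  obtain ⟨M, hM0, hM⟩ := hf.2.2.2.2.2
  -- maximum of t ↦ f t 0
  have hcont0 : ContinuousOn (fun t => f t 0) (Set.Icc (0:ℝ) 1) := by
    have : ContinuousOn ((fun p : ℝ × ℝ => f p.1 p.2) ∘ (fun t => (t, (0:ℝ))))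
        (Set.Icc (0:ℝ) 1) :=
      hf.2.1.comp ((continuous_id.prodMk continuous_const).continuousOn)
        (fun t ht => mem_box ht)
    exact this
  obtain ⟨t₁, ht₁, hmax⟩ := isCompact_Icc.exists_isMaxOn (Set.nonempty_Icc.mpr zero_le_one)
    hcont0
  set C : ℝ := f t₁ 0 with hC
  set Cu : ℝ := max C M with hCu
  have hcontC : ContinuousOn (fun t => f t Cu) (Set.Icc (0:ℝ) 1) := by
    have : ContinuousOn ((fun p : ℝ × ℝ => f p.1 p.2) ∘ (fun t => (t, Cu)))
        (Set.Icc (0:ℝ) 1) :=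
      hf.2.1.comp ((continuous_id.prodMk continuous_const).continuousOn)
        (fun t ht => mem_box ht)
    exact this
  obtain ⟨t₂, ht₂, hmin⟩ := isCompact_Icc.exists_isMinOn (Set.nonempty_Icc.mpr zero_le_one)
    hcontC
  set D : ℝ := f t₂ Cu with hD
  set Lb : ℝ := min (-M) D with hLb
  refine ⟨Lb, Cu, ?_, ?_⟩
  · calc Lb ≤ -M := min_le_left _ _
      _ ≤ M := by linarith
      _ ≤ Cu := le_max_right _ _
  intro t ht k hk x hx
  have hug := uni hf ht
  -- all orbit points are ≤ Cu
  have horb_le : ∀ j : ℕ, (f t)^[j] x ≤ Cu := by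
    have h1 : ∀ y : ℝ, f t y ≤ C := fun y => (uniMax hug y).trans (hmax ht)
    intro j
    rcases Nat.eq_zero_or_pos j with rfl | hj
    · have h2 : x = f t ((f t)^[k-1] x) := by
        conv_lhs => rw [← hx]
        exact iterate_pred (f t) k hk x
      simp only [Function.iterate_zero, id_eq]
      rw [h2]
      exact (h1 _).trans (le_max_left _ _)
    · rw [iterate_pred (f t) j hj x]
      exact (h1 _).trans (le_max_left _ _)
  -- the minimum of the orbit
  have hne : (Finset.image (fun j => (f t)^[j] x) (Finset.range k)).Nonempty :=
    ⟨x, Finset.mem_image.mpr ⟨0, Finset.mem_range.mpr hk, rfl⟩⟩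
  set O := Finset.image (fun j => (f t)^[j] x) (Finset.range k) with hO
  set mo := O.min' hne with hmo
  have hmoO : mo ∈ O := O.min'_mem hne
  obtain ⟨j₀, hj₀, hj₀e⟩ := Finset.mem_image.mp hmoO
  have hmole : ∀ z ∈ O, mo ≤ z := fun z hz => O.min'_le z hz
  -- orbit is closed under f t modulo wrap-around
  have hstep : ∀ j, j < k → f t ((f t)^[j] x) ∈ O := by
    intro j hj
    have h2 : f t ((f t)^[j] x) = (f t)^[j+1] x := (Function.iterate_succ_apply' _ _ _).symm
    rw [h2]
    rcases eq_or_lt_of_le (Nat.succ_le_of_lt hj) with he | hlt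
    · rw [show j + 1 = k from he, hx]
      exact Finset.mem_image.mpr ⟨0, Finset.mem_range.mpr hk, rfl⟩
    · exact Finset.mem_image.mpr ⟨j+1, Finset.mem_range.mpr hlt, rfl⟩
  -- lower bound for the minimum
  have hmoLb : Lb ≤ mo := by
    by_cases hcase : -M ≤ mo
    · exact (min_le_left _ _).trans hcase
    push_neg at hcase
    -- mo < -M : f t mo > mo, and mo = f t y for some y in the orbit
    have hfmo : f t mo ∈ O := by
      rw [← hj₀e] at *
      exact hstep j₀ (Finset.mem_range.mp hj₀)
    have hne2 : f t mo ≠ mo := by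
      intro h
      have := hM t ht mo h
      rw [Set.mem_Icc] at this
      linarith [this.1]
    have hgt : mo < f t mo := lt_of_le_of_ne (hmole _ hfmo) (Ne.symm hne2)
    -- find y with f t y = mo
    have hy : ∃ y ∈ O, f t y = mo := by
      have hj₀k : j₀ < k := Finset.mem_range.mp hj₀
      rcases Nat.eq_zero_or_pos j₀ with rfl | hj₀pos
      · refine ⟨(f t)^[k-1] x, Finset.mem_image.mpr ⟨k-1, Finset.mem_range.mpr (by omega), rfl⟩, ?_⟩
        rw [← iterate_pred (f t) k hk x, hx]
        simpa using hj₀e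
      · refine ⟨(f t)^[j₀-1] x, Finset.mem_image.mpr ⟨j₀-1, Finset.mem_range.mpr (by omega), rfl⟩, ?_⟩
        rw [← iterate_pred (f t) j₀ hj₀pos x]
        exact hj₀e
    obtain ⟨y, hyO, hyf⟩ := hy
    have hymo : mo ≤ y := hmole y hyO
    rcases le_or_gt y 0 with hy0 | hy0
    · -- monotone case gives a contradiction
      exfalso
      have := uniMono hug (Set.mem_Iic.mpr (le_trans hymo hy0)) (Set.mem_Iic.mpr hy0) hymo
      rw [hyf] at this
      linarith
    · -- antitone case: mo = f t y ≥ f t Cu ≥ D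
      have hyCu : y ≤ Cu := by
        obtain ⟨jy, hjy, hjye⟩ := Finset.mem_image.mp hyO
        rw [← hjye]
        exact horb_le jy
      have := uniAnti hug (Set.mem_Ici.mpr hy0.le) (Set.mem_Ici.mpr (hy0.le.trans hyCu)) hyCu
      rw [hyf] at this
      calc Lb ≤ D := min_le_right _ _
        _ ≤ f t Cu := hmin ht
        _ ≤ mo := this
  constructor
  · have : mo ≤ x := hmole x (Finset.mem_image.mpr ⟨0, Finset.mem_range.mpr hk, rfl⟩)
    linarith
  · have := horb_le 0
    simpa using this
lemma uniSMono {g : ℝ → ℝ} (h : Unimodal g) : StrictMonoOn g (Set.Iic 0) :=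
  strictMonoOn_of_deriv_pos (convex_Iic (0:ℝ)) (uniCont h).continuousOn
    (fun x hx => h.2.1 x (by simpa [interior_Iic] using hx))

lemma uniSAnti {g : ℝ → ℝ} (h : Unimodal g) : StrictAntiOn g (Set.Ici 0) :=
  strictAntiOn_of_deriv_neg (convex_Ici (0:ℝ)) (uniCont h).continuousOn
    (fun x hx => h.2.2.1 x (by simpa [interior_Ici] using hx))

lemma one_mem_I : (1:ℝ) ∈ Set.Icc (0:ℝ) 1 := ⟨zero_le_one, le_refl 1⟩

lemma zero_mem_I : (0:ℝ) ∈ Set.Icc (0:ℝ) 1 := ⟨le_refl 0, zero_le_one⟩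

lemma zset_bound (hf : ContFullFamily f) (hn : 0 < n) :
    ∃ Lb Cu : ℝ, Lb ≤ Cu ∧ Zset f n ⊆ Set.Icc (0:ℝ) 1 ×ˢ Set.Icc Lb Cu := by
  obtain ⟨Lb, Cu, hLC, hB⟩ := periodic_bound hf
  refine ⟨Lb, Cu, hLC, ?_⟩
  intro p hp
  obtain ⟨k, hk, hper⟩ := zset_periodic hn hp
  exact ⟨hp.1, hB p.1 hp.1 k hk p.2 hper⟩

lemma zset_compact (hf : ContFullFamily f) (hn : 0 < n) : IsCompact (Zset f n) := by
  obtain ⟨Lb, Cu, _, hB⟩ := zset_bound hf hn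
  exact IsCompact.of_isClosed_subset (isCompact_Icc.prod isCompact_Icc)
    (isClosed_zset hf n) hB

/-- The zero set avoids `t = 0`. -/
lemma no_t0 (hf : ContFullFamily f) (hn : 0 < n) (x : ℝ) : ((0:ℝ), x) ∉ Zset f n := by
  intro hx
  obtain ⟨k, hk, hper⟩ := zset_periodic hn hx
  simp only at hper
  set g := f 0 with hg
  have hnf : ∀ z, g z ≠ z := hf.2.2.2.1
  have hcont : Continuous g := uniCont (uni hf zero_mem_I)
  have hdich : (∀ z, z < g z) ∨ (∀ z, g z < z) := by
    by_contra h
    push_neg at h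
    obtain ⟨⟨z1, hz1⟩, ⟨z2, hz2⟩⟩ := h
    have hz1' : g z1 < z1 := lt_of_le_of_ne hz1 (hnf z1)
    have hz2' : z2 < g z2 := lt_of_le_of_ne hz2 (fun h => hnf z2 h.symm)
    have hφ : ContinuousOn (fun z => g z - z) (Set.uIcc z1 z2) :=
      (hcont.sub continuous_id).continuousOn
    have h0 : (0:ℝ) ∈ Set.uIcc (g z1 - z1) (g z2 - z2) := by
      rw [Set.mem_uIcc]
      left
      constructor <;> linarith
    obtain ⟨z0, _, hz0⟩ := intermediate_value_uIcc hφ h0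
    exact hnf z0 (by linarith [sub_eq_zero.mp hz0] : g z0 = z0)
  have hle : ∀ (h : ∀ z, z < g z) (j : ℕ), x ≤ g^[j] x := by
    intro h j
    induction j with
    | zero => simp
    | succ j ih =>
      rw [Function.iterate_succ_apply']
      exact ih.trans (h _).le
  have hge : ∀ (h : ∀ z, g z < z) (j : ℕ), g^[j] x ≤ x := by
    intro h j
    induction j with
    | zero => simp
    | succ j ih =>
      rw [Function.iterate_succ_apply']
      exact (h _).le.trans ih
  rcases hdich with h | h
  · have h1 := hle h (k-1)
    have h2 : g (g^[k-1] x) = x := by rw [← iterate_pred g k hk]; exact hper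
    have := h (g^[k-1] x)
    linarith
  · have h1 := hge h (k-1)
    have h2 : g (g^[k-1] x) = x := by rw [← iterate_pred g k hk]; exact hper
    have := h (g^[k-1] x)
    linarith

lemma one_lt_prod_abs (k : ℕ) (hk : 1 ≤ k) (u : ℕ → ℝ)
    (h : ∀ j, j < k → 1 < |u j|) : 1 < ∏ j ∈ Finset.range k, |u j| := by
  induction k with
  | zero => omega
  | succ k ih =>
    rcases Nat.eq_zero_or_pos k with rfl | hkpos
    · simpa using h 0 (by omega)
    · rw [Finset.prod_range_succ]
      exact one_lt_mul (le_of_lt (ih hkpos (fun j hj => h j (by omega)))) (h k (by omega))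

/-- All points on periodic orbits of the horseshoe map `f 1` lie in the expanding
region, so every multiplier along the orbit exceeds one in absolute value. -/
lemma horseshoe_orbit (hf : ContFullFamily f) {k : ℕ} {x : ℝ} (hk : 1 ≤ k)
    (hx : (f 1)^[k] x = x) : ∀ j : ℕ, 1 < |deriv (f 1) ((f 1)^[j] x)| := by
  obtain ⟨hu, a, c, hac, hfix, a₁, b₁, b, haa₁, ha₁b₁, hb₁b, hgb, hga₁, hgb₁, hexp⟩ :=
    hf.2.2.2.2.1
  have hfix_iff : ∀ z, f 1 z = z ↔ (z = a ∨ z = c) := by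
    intro z
    have : z ∈ {x : ℝ | f 1 x = x} ↔ z ∈ ({a, c} : Set ℝ) := by rw [hfix]
    simpa [Set.mem_insert_iff] using this
  have hfa : f 1 a = a := (hfix_iff a).mpr (Or.inl rfl)
  have hfc : f 1 c = c := (hfix_iff c).mpr (Or.inr rfl)
  have hSM := uniSMono hu
  have hSA := uniSAnti hu
  have hd0 : deriv (f 1) 0 = 0 := hu.2.2.2
  have ha0 : a < 0 := by
    rcases lt_trichotomy a 0 with h | h | h
    · exact h
    · exfalso
      have := hexp a (Or.inl ⟨le_refl a, haa₁.le⟩)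
      rw [h, hd0] at this
      simp at this
      linarith
    · exfalso
      have := hSA (Set.mem_Ici.mpr h.le) (Set.mem_Ici.mpr (h.le.trans hac.le)) hac
      rw [hfa, hfc] at this
      linarith
  have ha₁0 : a₁ < 0 := by
    by_contra h
    push_neg at h
    have := hexp 0 (Or.inl ⟨ha0.le, h⟩)
    rw [hd0] at this
    simp at this
    linarith
  have hb_pos : 0 < b := by
    by_contra h
    push_neg at h
    have hab : a < b := haa₁.trans (ha₁b₁.trans hb₁b)
    have := hSM (Set.mem_Iic.mpr (hab.le.trans h)) (Set.mem_Iic.mpr h) hab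
    rw [hfa, hgb] at this
    linarith
  have hb₁0 : 0 < b₁ := by
    by_contra h
    push_neg at h
    have := hexp 0 (Or.inr ⟨h, hb_pos.le⟩)
    rw [hd0] at this
    simp at this
    linarith
  have hderiva : 1 < deriv (f 1) a := by
    have h1 := hexp a (Or.inl ⟨le_refl a, haa₁.le⟩)
    have h2 : 0 < deriv (f 1) a := hu.2.1 a ha0
    rwa [abs_of_pos h2] at h1
  -- to the left of `a`, the map is strictly below the diagonal
  have hlt_a : ∀ z, z < a → f 1 z < z := by
    have hdc : Continuous (deriv (f 1)) := hu.1.continuous_deriv le_rfl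
    have hnb : {y : ℝ | 1 < deriv (f 1) y} ∈ nhds a :=
      (isOpen_lt continuous_const hdc).mem_nhds hderiva
    obtain ⟨η, hη, hball⟩ := Metric.mem_nhds_iff.mp hnb
    set x₁ := a - η/2 with hx₁
    have hx₁a : x₁ < a := by rw [hx₁]; linarith
    have hx₁lt : f 1 x₁ < x₁ := by
      obtain ⟨ξ, hξ, hslope⟩ := exists_deriv_eq_slope (f 1) hx₁a
        (uniCont hu).continuousOn ((uniDiff hu).differentiableOn)
      have hξball : ξ ∈ Metric.ball a η := by
        rw [Metric.mem_ball, Real.dist_eq, abs_sub_lt_iff]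
        obtain ⟨h1, h2⟩ := hξ
        constructor
        · linarith
        · rw [hx₁] at h1
          linarith
      have h1 : 1 < (f 1 a - f 1 x₁) / (a - x₁) := by
        rw [← hslope]
        exact hball hξball
      have h2 : 0 < a - x₁ := by linarith
      rw [lt_div_iff₀ h2] at h1
      rw [hfa] at h1
      linarith
    intro z hz
    by_contra hge
    push_neg at hge
    have hgz : z < f 1 z := by
      rcases eq_or_lt_of_le hge with h | h
      · exfalso
        rcases (hfix_iff z).mp h.symm with rfl | rfl
        · exact absurd hz (lt_irrefl _)
        · linarith
      · exact h
    have hφ : ContinuousOn (fun y => f 1 y - y) (Set.uIcc z x₁) :=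
      ((uniCont hu).sub continuous_id).continuousOn
    have h0 : (0:ℝ) ∈ Set.uIcc (f 1 z - z) (f 1 x₁ - x₁) := by
      rw [Set.mem_uIcc]
      right
      constructor <;> linarith
    obtain ⟨z0, hz0mem, hz0⟩ := intermediate_value_uIcc hφ h0
    have hz0fix : f 1 z0 = z0 := by linarith [sub_eq_zero.mp hz0]
    have hz0a : z0 < a := by
      rcases Set.mem_uIcc.mp hz0mem with ⟨_, h2⟩ | ⟨_, h2⟩
      · exact lt_of_le_of_lt h2 hx₁a
      · exact lt_of_le_of_lt h2 hz
    rcases (hfix_iff z0).mp hz0fix with rfl | rfl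
    · exact absurd hz0a (lt_irrefl _)
    · linarith
  -- escape to the left
  have hescape : ∀ z, z < a → ∀ j : ℕ, (f 1)^[j] z ≤ z ∧ (f 1)^[j] z < a := by
    intro z hz j
    induction j with
    | zero => exact ⟨le_refl z, hz⟩
    | succ j ih =>
      rw [Function.iterate_succ_apply']
      have := hlt_a _ ih.2
      exact ⟨this.le.trans ih.1, lt_of_le_of_lt (this.le.trans ih.1) hz⟩
  -- orbit points are periodic
  have horbper : ∀ j : ℕ, (f 1)^[k] ((f 1)^[j] x) = (f 1)^[j] x := by
    intro j
    rw [← Function.iterate_add_apply, Nat.add_comm, Function.iterate_add_apply, hx]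
  have horb_ge : ∀ j : ℕ, a ≤ (f 1)^[j] x := by
    intro j
    by_contra h
    push_neg at h
    set z := (f 1)^[j] x with hzd
    have h1 := (hescape z h (k-1)).1
    have h2 := (hescape z h (k-1)).2
    have h3 : f 1 ((f 1)^[k-1] z) = z := by rw [← iterate_pred (f 1) k hk]; exact horbper j
    have := hlt_a _ h2
    linarith
  have horb_le : ∀ j : ℕ, (f 1)^[j] x ≤ b := by
    intro j
    by_contra h
    push_neg at h
    have h1 : f 1 ((f 1)^[j] x) < f 1 b := hSA (Set.mem_Ici.mpr hb_pos.le)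
      (Set.mem_Ici.mpr (hb_pos.le.trans h.le)) h
    rw [hgb] at h1
    have h2 := horb_ge (j+1)
    rw [Function.iterate_succ_apply'] at h2
    linarith
  have horb_mem : ∀ j : ℕ, (f 1)^[j] x ∈ Set.Icc a a₁ ∪ Set.Icc b₁ b := by
    intro j
    set z := (f 1)^[j] x with hzd
    have hza := horb_ge j
    have hzb := horb_le j
    rcases le_or_gt z a₁ with h | h
    · exact Or.inl ⟨hza, h⟩
    rcases le_or_gt b₁ z with h' | h'
    · exact Or.inr ⟨h', hzb⟩
    exfalso
    have hgz : b < f 1 z := by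
      rcases le_or_gt z 0 with hz0 | hz0
      · have := hSM (Set.mem_Iic.mpr (h.le.trans hz0)) (Set.mem_Iic.mpr hz0) h
        rw [hga₁] at this
        exact this
      · have := hSA (Set.mem_Ici.mpr hz0.le) (Set.mem_Ici.mpr (hz0.le.trans h'.le)) h'
        rw [hgb₁] at this
        exact this
    have h2 := horb_le (j+1)
    rw [Function.iterate_succ_apply'] at h2
    linarith
  intro j
  exact hexp _ (horb_mem j)

/-- Iterated expansion at periodic points of the horseshoe. -/
lemma horseshoe_iter_exp (hf : ContFullFamily f) {k : ℕ} {x : ℝ} (hk : 1 ≤ k)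
    (hx : (f 1)^[k] x = x) : 1 < |deriv ((f 1)^[k]) x| := by
  rw [derivIter_eq hf one_mem_I k x, Finset.abs_prod]
  exact one_lt_prod_abs k hk _ (fun j _ => horseshoe_orbit hf hk hx j)
lemma contG_x (hf : ContFullFamily f) (n : ℕ) : Continuous (fun x => Gmap f n 1 x) := by
  rw [← continuousOn_univ]
  have : ContinuousOn ((fun p : ℝ × ℝ => Gmap f n p.1 p.2) ∘ (fun x : ℝ => ((1:ℝ), x)))
      Set.univ :=
    (contGmap hf n).comp ((continuous_const.prodMk continuous_id).continuousOn)
      (fun x _ => mem_box one_mem_I)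
  exact this

lemma contG_t (hf : ContFullFamily f) (n : ℕ) (x : ℝ) :
    ContinuousOn (fun t => Gmap f n t x) (Set.Icc (0:ℝ) 1) := by
  have : ContinuousOn ((fun p : ℝ × ℝ => Gmap f n p.1 p.2) ∘ (fun t : ℝ => (t, x)))
      (Set.Icc (0:ℝ) 1) :=
    (contGmap hf n).comp ((continuous_id.prodMk continuous_const).continuousOn)
      (fun t ht => mem_box ht)
  exact this

lemma contDeriv_x (hf : ContFullFamily f) (k : ℕ) :
    Continuous (fun x => deriv ((f 1)^[k]) x) := by
  rw [← continuousOn_univ]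
  have : ContinuousOn ((fun p : ℝ × ℝ => deriv ((f p.1)^[k]) p.2) ∘ (fun x : ℝ => ((1:ℝ), x)))
      Set.univ :=
    (contDerivIter hf k).comp ((continuous_const.prodMk continuous_id).continuousOn)
      (fun x _ => mem_box one_mem_I)
  exact this

noncomputable def sgn (y : ℝ) : ℝ := if 0 < y then 1 else if y < 0 then -1 else 0

lemma sgn_of_pos {y : ℝ} (h : 0 < y) : sgn y = 1 := if_pos h

lemma sgn_of_neg {y : ℝ} (h : y < 0) : sgn y = -1 := by
  rw [sgn, if_neg (asymm h), if_pos h]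

lemma mul_pos_of_sgn_eq {u v : ℝ} (hu : u ≠ 0) (hv : v ≠ 0) (h : sgn u = sgn v) :
    0 < u * v := by
  rcases hu.lt_or_gt with h1 | h1 <;> rcases hv.lt_or_gt with h2 | h2
  · exact mul_pos_of_neg_of_neg h1 h2
  · rw [sgn_of_neg h1, sgn_of_pos h2] at h; norm_num at h
  · rw [sgn_of_pos h1, sgn_of_neg h2] at h; norm_num at h
  · exact mul_pos h1 h2

/-- Sign constancy along an interval without zeros. -/
lemma sgn_eq (g : ℝ → ℝ) {a b : ℝ} (hab : a ≤ b) (hg : ContinuousOn g (Set.Icc a b))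
    (hz : ∀ y ∈ Set.Icc a b, g y ≠ 0) : sgn (g a) = sgn (g b) := by
  have key0 : (0:ℝ) ∉ Set.uIcc (g a) (g b) := by
    intro h0
    obtain ⟨z, hz1, hz2⟩ := intermediate_value_uIcc
      (by rwa [Set.uIcc_of_le hab] : ContinuousOn g (Set.uIcc a b)) h0
    exact hz z (by rwa [← Set.uIcc_of_le hab]) hz2
  rcases (hz a ⟨le_refl a, hab⟩).lt_or_gt with ha | ha
  · have hb : g b < 0 := by
      rcases (hz b ⟨hab, le_refl b⟩).lt_or_gt with h | h
      · exact h
      · exact absurd (Set.mem_uIcc.mpr (Or.inl ⟨ha.le, h.le⟩)) key0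
    rw [sgn_of_neg ha, sgn_of_neg hb]
  · have hb : 0 < g b := by
      rcases (hz b ⟨hab, le_refl b⟩).lt_or_gt with h | h
      · exact absurd (Set.mem_uIcc.mpr (Or.inr ⟨h.le, ha.le⟩)) key0
      · exact h
    rw [sgn_of_pos ha, sgn_of_pos hb]

/-- Local structure of the zero set of `Gmap` at `t = 1`: isolated zeros, with a
sign change. -/
lemma t1_local (hf : ContFullFamily f) (hn : 0 < n) {x₀ : ℝ} (hx₀ : Gmap f n 1 x₀ = 0) :
    ∃ ρ > 0, (∀ z ∈ Set.Icc (x₀-ρ) (x₀+ρ), Gmap f n 1 z = 0 → z = x₀) ∧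
      Gmap f n 1 (x₀-ρ) * Gmap f n 1 (x₀+ρ) < 0 := by
  have hn1 : 1 ≤ n := hn
  -- periodicity and the denominator condition
  have hmain : (f 1)^[n] x₀ = x₀ ∧ (¬ Odd n → (f 1)^[n/2] x₀ ≠ x₀) := by
    by_cases ho : Odd n
    · have h := gmap_odd (f := f) ho 1 x₀
      rw [hx₀] at h
      exact ⟨sub_eq_zero.mp h.symm, fun h' => absurd ho (by tauto)⟩
    · have hm1 : 1 ≤ n / 2 := by
        rcases Nat.not_odd_iff_even.mp ho with ⟨m, hm⟩
        omega
      by_cases hfix : (f 1)^[n/2] x₀ = x₀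
      · exfalso
        have h := gmap_even_fix (f := f) ho hfix
        rw [hx₀] at h
        have h2 : deriv ((f 1)^[n/2]) x₀ = -1 := by linarith
        have := horseshoe_iter_exp hf hm1 hfix
        rw [h2] at this
        norm_num at this
      · have h := gmap_even_nfix (f := f) ho hfix
        rw [hx₀] at h
        have hden : (f 1)^[n/2] x₀ - x₀ ≠ 0 := sub_ne_zero.mpr hfix
        have := (div_eq_zero_iff.mp h.symm).resolve_right hden
        exact ⟨sub_eq_zero.mp this, fun _ => hfix⟩
  obtain ⟨hper, hhalf⟩ := hmain
  have hκ := horseshoe_iter_exp hf hn1 hper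
  set κ := deriv ((f 1)^[n]) x₀ with hκd
  set N : ℝ → ℝ := fun z => (f 1)^[n] z - z with hN
  have hNd : ∀ z, HasDerivAt N (deriv ((f 1)^[n]) z - 1) z :=
    fun z => (hasDerivIter hf one_mem_I n z).deriv ▸
      ((hasDerivIter hf one_mem_I n z).sub (hasDerivAt_id z))
  have hNx₀ : N x₀ = 0 := by rw [hN]; simp [hper]
  have hNc : Continuous N :=
    (((uniCont (uni hf one_mem_I)).iterate n)).sub continuous_id
  have hDc : Continuous (fun z => deriv ((f 1)^[n]) z) := contDeriv_x hf n
  -- a radius on which N is strictly monotone (or strictly antitone)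
  have hmono : ∃ ρ₁ > 0, StrictMonoOn N (Set.Icc (x₀-ρ₁) (x₀+ρ₁)) ∨
      StrictAntiOn N (Set.Icc (x₀-ρ₁) (x₀+ρ₁)) := by
    rcases lt_or_gt_of_ne (by intro h; rw [h] at hκ; norm_num at hκ : κ ≠ 1) with hκ1 | hκ1
    · -- κ < 1 : antitone (in fact κ < -1)
      have hnb : {z : ℝ | deriv ((f 1)^[n]) z < 1} ∈ nhds x₀ :=
        (isOpen_lt hDc continuous_const).mem_nhds hκ1
      obtain ⟨η, hη, hball⟩ := Metric.mem_nhds_iff.mp hnb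
      refine ⟨η/2, by linarith, Or.inr ?_⟩
      apply strictAntiOn_of_deriv_neg (convex_Icc _ _) hNc.continuousOn
      intro z hz
      rw [interior_Icc] at hz
      have hzball : z ∈ Metric.ball x₀ η := by
        rw [Metric.mem_ball, Real.dist_eq, abs_sub_lt_iff]
        obtain ⟨h1, h2⟩ := hz
        constructor <;> linarith
      rw [(hNd z).deriv]
      have h3 : deriv ((f 1)^[n]) z < 1 := hball hzball
      simpa using sub_neg.mpr h3
    · -- κ > 1 : monotone
      have hnb : {z : ℝ | 1 < deriv ((f 1)^[n]) z} ∈ nhds x₀ :=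
        (isOpen_lt continuous_const hDc).mem_nhds hκ1
      obtain ⟨η, hη, hball⟩ := Metric.mem_nhds_iff.mp hnb
      refine ⟨η/2, by linarith, Or.inl ?_⟩
      apply strictMonoOn_of_deriv_pos (convex_Icc _ _) hNc.continuousOn
      intro z hz
      rw [interior_Icc] at hz
      have hzball : z ∈ Metric.ball x₀ η := by
        rw [Metric.mem_ball, Real.dist_eq, abs_sub_lt_iff]
        obtain ⟨h1, h2⟩ := hz
        constructor <;> linarith
      rw [(hNd z).deriv]
      have h3 : 1 < deriv ((f 1)^[n]) z := hball hzball
      simpa using sub_pos.mpr h3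
  obtain ⟨ρ₁, hρ₁, hmono⟩ := hmono
  -- in the even case, the half-iterate has no fixed points near x₀
  have hhalfnz : ∃ ρ₂ > 0, ¬ Odd n →
      ∀ z ∈ Set.Icc (x₀-ρ₂) (x₀+ρ₂), (f 1)^[n/2] z - z ≠ 0 := by
    by_cases ho : Odd n
    · exact ⟨1, one_pos, fun h => absurd ho h⟩
    · have hcont : Continuous (fun z => (f 1)^[n/2] z - z) :=
        ((uniCont (uni hf one_mem_I)).iterate _).sub continuous_id
      have hnz : (f 1)^[n/2] x₀ - x₀ ≠ 0 := sub_ne_zero.mpr (hhalf ho)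
      have hnb : {z : ℝ | (f 1)^[n/2] z - z ≠ 0} ∈ nhds x₀ :=
        (isOpen_ne_fun hcont continuous_const).mem_nhds hnz
      obtain ⟨η, hη, hball⟩ := Metric.mem_nhds_iff.mp hnb
      refine ⟨η/2, by linarith, fun _ z hz => hball ?_⟩
      rw [Metric.mem_ball, Real.dist_eq, abs_sub_lt_iff]
      obtain ⟨h1, h2⟩ := hz
      constructor <;> linarith
  obtain ⟨ρ₂, hρ₂, hhalfnz⟩ := hhalfnz
  set ρ := min ρ₁ ρ₂ with hρd
  have hρ : 0 < ρ := lt_min hρ₁ hρ₂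
  have hIcc : Set.Icc (x₀-ρ) (x₀+ρ) ⊆ Set.Icc (x₀-ρ₁) (x₀+ρ₁) := by
    apply Set.Icc_subset_Icc <;> [linarith [min_le_left ρ₁ ρ₂]; linarith [min_le_left ρ₁ ρ₂]]
  have hIcc2 : Set.Icc (x₀-ρ) (x₀+ρ) ⊆ Set.Icc (x₀-ρ₂) (x₀+ρ₂) := by
    apply Set.Icc_subset_Icc <;> [linarith [min_le_right ρ₁ ρ₂]; linarith [min_le_right ρ₁ ρ₂]]
  have hx₀mem : x₀ ∈ Set.Icc (x₀-ρ) (x₀+ρ) := by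
    constructor <;> linarith
  have hlo : x₀ - ρ ∈ Set.Icc (x₀-ρ) (x₀+ρ) := by constructor <;> linarith
  have hhi : x₀ + ρ ∈ Set.Icc (x₀-ρ) (x₀+ρ) := by constructor <;> linarith
  -- zeros of Gmap are zeros of N
  have hGN : ∀ z ∈ Set.Icc (x₀-ρ) (x₀+ρ), Gmap f n 1 z = 0 → N z = 0 := by
    intro z hz hGz
    by_cases ho : Odd n
    · have h := gmap_odd (f := f) ho 1 z
      rw [hGz] at h
      exact h.symm ▸ rfl
    · have hzfix : (f 1)^[n/2] z ≠ z :=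
        fun h => hhalfnz ho z (hIcc2 hz) (by rw [h, sub_self])
      have h := gmap_even_nfix (f := f) ho hzfix
      rw [hGz] at h
      have hden : (f 1)^[n/2] z - z ≠ 0 := sub_ne_zero.mpr hzfix
      exact (div_eq_zero_iff.mp h.symm).resolve_right hden
  -- injectivity of N on the interval
  have hInj : ∀ z ∈ Set.Icc (x₀-ρ) (x₀+ρ), N z = 0 → z = x₀ := by
    intro z hz hNz
    rcases hmono with hm | hm
    · exact hm.injOn (hIcc hz) (hIcc hx₀mem) (by rw [hNz, hNx₀])
    · exact hm.injOn (hIcc hz) (hIcc hx₀mem) (by rw [hNz, hNx₀])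
  -- endpoint signs of N
  have hNends : N (x₀-ρ) * N (x₀+ρ) < 0 := by
    rcases hmono with hm | hm
    · have h1 : N (x₀-ρ) < N x₀ := hm (hIcc hlo) (hIcc hx₀mem) (by linarith)
      have h2 : N x₀ < N (x₀+ρ) := hm (hIcc hx₀mem) (hIcc hhi) (by linarith)
      rw [hNx₀] at h1 h2
      exact mul_neg_of_neg_of_pos h1 h2
    · have h1 : N x₀ < N (x₀-ρ) := hm (hIcc hlo) (hIcc hx₀mem) (by linarith)
      have h2 : N (x₀+ρ) < N x₀ := hm (hIcc hx₀mem) (hIcc hhi) (by linarith)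
      rw [hNx₀] at h1 h2
      exact mul_neg_of_pos_of_neg h1 h2
  refine ⟨ρ, hρ, ?_, ?_⟩
  · exact fun z hz hGz => hInj z hz (hGN z hz hGz)
  · by_cases ho : Odd n
    · rw [gmap_odd (f := f) ho, gmap_odd (f := f) ho]
      exact hNends
    · have hlofix : (f 1)^[n/2] (x₀-ρ) ≠ (x₀-ρ) :=
        fun h => hhalfnz ho _ (hIcc2 hlo) (by rw [h, sub_self])
      have hhifix : (f 1)^[n/2] (x₀+ρ) ≠ (x₀+ρ) :=
        fun h => hhalfnz ho _ (hIcc2 hhi) (by rw [h, sub_self])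
      rw [gmap_even_nfix (f := f) ho hlofix, gmap_even_nfix (f := f) ho hhifix]
      set h2 : ℝ → ℝ := fun z => (f 1)^[n/2] z - z with hh2
      have hconth : Continuous h2 :=
        ((uniCont (uni hf one_mem_I)).iterate _).sub continuous_id
      have hsgneq : sgn (h2 (x₀-ρ)) = sgn (h2 (x₀+ρ)) :=
        sgn_eq h2 (by linarith) hconth.continuousOn
          (fun y hy => hhalfnz ho y (hIcc2 hy))
      have hpos : 0 < h2 (x₀-ρ) * h2 (x₀+ρ) :=
        mul_pos_of_sgn_eq (hhalfnz ho _ (hIcc2 hlo)) (hhalfnz ho _ (hIcc2 hhi)) hsgneq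
      have : (N (x₀-ρ) / h2 (x₀-ρ)) * (N (x₀+ρ) / h2 (x₀+ρ))
          = (N (x₀-ρ) * N (x₀+ρ)) / (h2 (x₀-ρ) * h2 (x₀+ρ)) := by
        field_simp
      rw [show ((f 1)^[n] (x₀-ρ) - (x₀-ρ)) / ((f 1)^[n/2] (x₀-ρ) - (x₀-ρ))
          = N (x₀-ρ) / h2 (x₀-ρ) from rfl,
        show ((f 1)^[n] (x₀+ρ) - (x₀+ρ)) / ((f 1)^[n/2] (x₀+ρ) - (x₀+ρ))
          = N (x₀+ρ) / h2 (x₀+ρ) from rfl, this]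
      exact div_neg_of_neg_of_pos hNends hpos
/-- The zero set at `t = 1` is finite. -/
lemma t1_finite (hf : ContFullFamily f) (hn : 0 < n) :
    {x : ℝ | Gmap f n 1 x = 0}.Finite := by
  set Z1 := {x : ℝ | Gmap f n 1 x = 0} with hZ1
  obtain ⟨Lb, Cu, hLC, hbox⟩ := zset_bound hf hn
  have hsub : Z1 ⊆ Set.Icc Lb Cu := by
    intro x hx
    have : ((1:ℝ), x) ∈ Zset f n := ⟨one_mem_I, hx⟩
    exact (hbox this).2
  have hclosed : IsClosed Z1 := isClosed_eq (contG_x hf n) continuous_const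
  have hcpt : IsCompact Z1 := IsCompact.of_isClosed_subset isCompact_Icc hclosed hsub
  choose ρ hρ using fun (z : Z1) => t1_local hf hn z.2
  have hcover : Z1 ⊆ ⋃ z : Z1, Set.Ioo ((z:ℝ) - ρ z) ((z:ℝ) + ρ z) := by
    intro x hx
    exact Set.mem_iUnion.mpr ⟨⟨x, hx⟩, by constructor <;> simp <;>
      [linarith [(hρ ⟨x, hx⟩).1]; linarith [(hρ ⟨x, hx⟩).1]]⟩
  obtain ⟨t, ht⟩ := hcpt.elim_finite_subcover _ (fun z => isOpen_Ioo) hcover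
  have hfin : ((fun z : {x // x ∈ Z1} => (z : ℝ)) '' ↑t).Finite :=
    Set.Finite.image _ t.finite_toSet
  apply hfin.subset
  intro x hx
  obtain ⟨z, hzt, hzx⟩ := Set.mem_iUnion₂.mp (ht hx)
  have hxz : x = (z : ℝ) := by
    apply (hρ z).2.1 x ?_ hx
    exact ⟨hzx.1.le, hzx.2.le⟩
  exact ⟨z, hzt, hxz.symm⟩

/-- Clopen separation: a compact relatively clopen piece of the zero set containing
`V` and avoiding a given finite set disjoint from `V`. -/
lemma clopen_piece (hf : ContFullFamily f) (hn : 0 < n) {p₀ : ℝ × ℝ}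
    (hp₀ : p₀ ∈ Zset f n) {F : Set (ℝ × ℝ)} (hF : F.Finite) (hFZ : F ⊆ Zset f n)
    (hFV : ∀ q ∈ F, q ∉ connectedComponentIn (Zset f n) p₀) :
    ∃ K : Set (ℝ × ℝ), IsCompact K ∧ connectedComponentIn (Zset f n) p₀ ⊆ K ∧
      K ⊆ Zset f n ∧ (∀ q ∈ F, q ∉ K) ∧
      ∃ δ > 0, ∀ p ∈ Zset f n, (∃ q ∈ K, dist p q ≤ δ) → p ∈ K := by
  have hcpt : IsCompact (Zset f n) := zset_compact hf hn
  haveI : CompactSpace (Zset f n) := isCompact_iff_compactSpace.mp hcpt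
  set Z := Zset f n with hZ
  set ptl : Z := ⟨p₀, hp₀⟩ with hptl
  -- for each q in F, a clopen set containing ptl and avoiding q
  have hsep : ∀ q : F, ∃ C : Set Z, IsClopen C ∧ ptl ∈ C ∧ (⟨(q : ℝ × ℝ), hFZ q.2⟩ : Z) ∉ C := by
    intro q
    have hq : (⟨(q : ℝ × ℝ), hFZ q.2⟩ : Z) ∉ connectedComponent ptl := by
      intro hmem
      apply hFV q q.2
      rw [connectedComponentIn_eq_image hp₀]
      exact ⟨_, hmem, rfl⟩
    rw [connectedComponent_eq_iInter_isClopen, Set.mem_iInter] at hq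
    push_neg at hq
    obtain ⟨⟨C, hC, hpC⟩, hqC⟩ := hq
    exact ⟨C, hC, hpC, hqC⟩
  choose C hCclopen hCp hCq using hsep
  haveI : Finite F := hF
  set Ktl : Set Z := ⋂ q : F, C q with hKtl
  have hKtlclopen : IsClopen Ktl := isClopen_iInter_of_finite hCclopen
  have hKtlp : ptl ∈ Ktl := Set.mem_iInter.mpr hCp
  have hcomp : connectedComponent ptl ⊆ Ktl :=
    Set.subset_iInter (fun q => (hCclopen q).connectedComponent_subset (hCp q))
  set K : Set (ℝ × ℝ) := (↑) '' Ktl with hK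
  have hKsub : K ⊆ Z := by
    rintro p ⟨z, _, rfl⟩
    exact z.2
  have hKcpt : IsCompact K := by
    have : IsCompact Ktl := hKtlclopen.1.isCompact
    exact this.image continuous_subtype_val
  have hKV : connectedComponentIn Z p₀ ⊆ K := by
    rw [connectedComponentIn_eq_image hp₀]
    exact Set.image_mono hcomp
  have hKF : ∀ q ∈ F, q ∉ K := by
    rintro q hq ⟨z, hzKtl, hzq⟩
    have : z = ⟨q, hFZ hq⟩ := Subtype.ext hzq
    rw [this] at hzKtl
    exact hCq ⟨q, hq⟩ (Set.mem_iInter.mp hzKtl ⟨q, hq⟩)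
  -- relative openness gives a thickening
  obtain ⟨U, hUopen, hU⟩ := isOpen_induced_iff.mp hKtlclopen.2
  have hKU : K ⊆ U := by
    rintro p ⟨z, hz, rfl⟩
    rw [← hU] at hz
    exact hz
  obtain ⟨δ, hδ, hthick⟩ := hKcpt.exists_thickening_subset_open hUopen hKU
  refine ⟨K, hKcpt, hKV, hKsub, hKF, δ/2, by linarith, ?_⟩
  rintro p hp ⟨q, hqK, hdist⟩
  have hpU : p ∈ U := hthick (Metric.mem_thickening_iff.mpr ⟨q, hqK, by linarith⟩)
  have : (⟨p, hp⟩ : Z) ∈ Ktl := by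
    rw [← hU]
    exact hpU
  exact ⟨⟨p, hp⟩, this, rfl⟩
/-! Grid degree machinery -/

noncomputable def Gp (o ε : ℝ) (m : ℤ) : ℝ := o + m * ε

noncomputable def cellSum (g : ℝ → ℝ) (o ε : ℝ) (B : Finset ℤ) : ℝ :=
  ∑ m ∈ B, (sgn (g (Gp o ε (m+1))) - sgn (g (Gp o ε m)))

lemma Gp_le_succ {o ε : ℝ} (hε : 0 < ε) (m : ℤ) : Gp o ε m ≤ Gp o ε (m+1) := by
  have : ((m+1 : ℤ) : ℝ) * ε = (m : ℝ) * ε + ε := by push_cast; ring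
  rw [Gp, Gp, this]
  linarith

lemma cellSum_eq_of_zerofree {g : ℝ → ℝ} {o ε : ℝ} (hε : 0 < ε) (hg : Continuous g)
    {B B' : Finset ℤ} (hsub : B' ⊆ B)
    (hzf : ∀ m ∈ B \ B', ∀ x ∈ Set.Icc (Gp o ε m) (Gp o ε (m+1)), g x ≠ 0) :
    cellSum g o ε B = cellSum g o ε B' := by
  rw [cellSum, ← Finset.sum_sdiff hsub]
  have hz : ∀ m ∈ B \ B', (sgn (g (Gp o ε (m+1))) - sgn (g (Gp o ε m))) = 0 := by
    intro m hm
    have := sgn_eq g (Gp_le_succ hε m) hg.continuousOn (hzf m hm)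
    linarith
  rw [Finset.sum_eq_zero hz, zero_add, cellSum]

lemma cellSum_Icc (g : ℝ → ℝ) (o ε : ℝ) (m1 : ℤ) : ∀ m2, m1 ≤ m2 →
    cellSum g o ε (Finset.Icc m1 m2) = sgn (g (Gp o ε (m2+1))) - sgn (g (Gp o ε m1)) := by
  refine Int.le_induction ?_ ?_
  · rw [Finset.Icc_self, cellSum, Finset.sum_singleton]
  · intro m2 hle ih
    have hins : Finset.Icc m1 (m2+1) = insert (m2+1) (Finset.Icc m1 m2) := by
      ext k
      simp only [Finset.mem_Icc, Finset.mem_insert]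
      omega
    have hnotmem : (m2+1) ∉ Finset.Icc m1 m2 := by simp [Finset.mem_Icc]
    rw [cellSum, hins, Finset.sum_insert hnotmem]
    rw [cellSum] at ih
    rw [ih]
    ring

lemma cellSum_telescope (g : ℝ → ℝ) (o ε : ℝ) (mhi : ℤ) (B : Finset ℤ)
    (hB : B ⊆ Finset.Icc 0 mhi) :
    cellSum g o ε B = ∑ k ∈ Finset.Icc 0 (mhi+1),
      (((if k-1 ∈ B then (1:ℝ) else 0) - (if k ∈ B then 1 else 0)) * sgn (g (Gp o ε k))) := by
  have hsub1 : B ⊆ Finset.Icc 0 (mhi+1) := hB.trans (Finset.Icc_subset_Icc le_rfl (by omega))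
  have h2 : ∑ k ∈ Finset.Icc 0 (mhi+1), (if k ∈ B then (1:ℝ) else 0) * sgn (g (Gp o ε k))
      = ∑ m ∈ B, sgn (g (Gp o ε m)) := by
    rw [show (fun k => (if k ∈ B then (1:ℝ) else 0) * sgn (g (Gp o ε k)))
        = (fun k => (if k ∈ B then sgn (g (Gp o ε k)) else 0)) from ?_]
    · rw [Finset.sum_ite_mem, Finset.inter_eq_right.mpr hsub1]
    · funext k
      by_cases h : k ∈ B <;> simp [h]
  have h1 : ∑ k ∈ Finset.Icc 0 (mhi+1), (if k-1 ∈ B then (1:ℝ) else 0) * sgn (g (Gp o ε k))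
      = ∑ m ∈ B, sgn (g (Gp o ε (m+1))) := by
    have himg : ∀ k : ℤ, (k - 1 ∈ B) ↔ k ∈ B.image (· + 1) := by
      intro k
      simp only [Finset.mem_image]
      constructor
      · intro h; exact ⟨k-1, h, by ring⟩
      · rintro ⟨m, hm, rfl⟩; simpa using hm
    rw [show (fun k => (if k-1 ∈ B then (1:ℝ) else 0) * sgn (g (Gp o ε k)))
        = (fun k => (if k ∈ B.image (· + 1) then sgn (g (Gp o ε k)) else 0)) from ?_]
    · rw [Finset.sum_ite_mem]
      have hsub2 : B.image (· + 1) ⊆ Finset.Icc 0 (mhi+1) := by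
        intro k hk
        obtain ⟨m, hm, rfl⟩ := Finset.mem_image.mp hk
        have := Finset.mem_Icc.mp (hB hm)
        simp only [Finset.mem_Icc]
        omega
      rw [Finset.inter_eq_right.mpr hsub2, Finset.sum_image (by intro a _ b _ h; exact add_right_cancel h)]
    · funext k
      by_cases h : k - 1 ∈ B
      · rw [if_pos h, if_pos ((himg k).mp h), one_mul]
      · rw [if_neg h, if_neg (fun hc => h ((himg k).mpr hc)), zero_mul]
  rw [cellSum, Finset.sum_sub_distrib]
  rw [← h1, ← h2, ← Finset.sum_sub_distrib]
  apply Finset.sum_congr rfl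
  intro k _
  ring

/-- Two sign data giving the same boundary signs give the same cell sum. -/
lemma cellSum_eq_of_boundary (g₁ g₂ : ℝ → ℝ) (o ε : ℝ) (mhi : ℤ) (B : Finset ℤ)
    (hB : B ⊆ Finset.Icc 0 mhi)
    (hbd : ∀ k : ℤ, k ∈ Finset.Icc 0 (mhi+1) →
      ((k-1 ∈ B ∧ k ∉ B) ∨ (k-1 ∉ B ∧ k ∈ B)) →
      sgn (g₁ (Gp o ε k)) = sgn (g₂ (Gp o ε k))) :
    cellSum g₁ o ε B = cellSum g₂ o ε B := by
  rw [cellSum_telescope g₁ o ε mhi B hB, cellSum_telescope g₂ o ε mhi B hB]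
  apply Finset.sum_congr rfl
  intro k hk
  by_cases h1 : k - 1 ∈ B <;> by_cases h2 : k ∈ B
  · simp [h1, h2]
  · rw [hbd k hk (Or.inl ⟨h1, h2⟩)]
  · rw [hbd k hk (Or.inr ⟨h1, h2⟩)]
  · simp [h1, h2]
lemma contG_xt (hf : ContFullFamily f) (n : ℕ) {t : ℝ} (ht : t ∈ Set.Icc (0:ℝ) 1) :
    Continuous (fun x => Gmap f n t x) := by
  rw [← continuousOn_univ]
  have : ContinuousOn ((fun p : ℝ × ℝ => Gmap f n p.1 p.2) ∘ (fun x : ℝ => (t, x)))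
      Set.univ :=
    (contGmap hf n).comp ((continuous_const.prodMk continuous_id).continuousOn)
      (fun x _ => mem_box ht)
  exact this

end S11

open S11 in
set_option maxHeartbeats 2000000 in
/-- Let `V` be a periodic point component of `G_n⁻¹(0)` of period `n`.
If `V` meets the line `{t = 1}`, then it meets it in at least two points. -/
theorem stmt11 (f : ℝ → ℝ → ℝ) (hf : ContFullFamily f) (n : ℕ) (hn : 0 < n)
    (V : Set (ℝ × ℝ)) (hV : IsPPComponent f n V) (hVper : CompPeriod f V n)
    (hne : (V ∩ {p : ℝ × ℝ | p.1 = 1}).Nonempty) :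
    ∃ p ∈ V ∩ {p : ℝ × ℝ | p.1 = 1}, ∃ q ∈ V ∩ {p : ℝ × ℝ | p.1 = 1}, p ≠ q := by
  classical
  by_contra hcon
  push_neg at hcon
  obtain ⟨pstar, hpstar⟩ := hne
  have hsingle : ∀ q ∈ V ∩ {p : ℝ × ℝ | p.1 = 1}, q = pstar :=
    fun q hq => hcon q hq pstar hpstar
  have hpV : pstar ∈ V := hpstar.1
  have hp1 : pstar.1 = 1 := hpstar.2
  obtain ⟨p₀, hp₀Z, hVeq⟩ := hV
  have hVZ : V ⊆ Zset f n := by rw [hVeq]; exact connectedComponentIn_subset _ _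
  have hpZ : pstar ∈ Zset f n := hVZ hpV
  have hVeq' : V = connectedComponentIn (Zset f n) pstar := by
    rw [hVeq]
    exact connectedComponentIn_eq (by rw [← hVeq]; exact hpV)
  set xs := pstar.2 with hxs
  have hps : pstar = ((1:ℝ), xs) := by rw [← hp1]
  have hGxs : Gmap f n 1 xs = 0 := by
    have := hpZ.2
    rwa [hp1] at this
  obtain ⟨Lb, Cu, hLC, hbox⟩ := zset_bound hf hn
  have hxsbox : xs ∈ Set.Icc Lb Cu := (hbox hpZ).2
  obtain ⟨ρ, hρ, hiso, hsign⟩ := t1_local hf hn hGxs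
  -- exceptional finite set on the line t = 1
  set F : Set (ℝ × ℝ) := (Zset f n ∩ {p : ℝ × ℝ | p.1 = 1}) \ V with hFdef
  have hFfin : F.Finite := by
    have hsub : F ⊆ (fun x => ((1:ℝ), x)) '' {x : ℝ | Gmap f n 1 x = 0} := by
      rintro ⟨t, x⟩ ⟨⟨hZ, ht⟩, _⟩
      simp only [Set.mem_setOf_eq] at ht
      subst ht
      exact ⟨x, by simpa using hZ.2, rfl⟩
    exact (Set.Finite.image _ (t1_finite hf hn)).subset hsub
  have hFZ : F ⊆ Zset f n := fun q hq => hq.1.1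
  have hFV : ∀ q ∈ F, q ∉ connectedComponentIn (Zset f n) pstar :=
    fun q hq hc => hq.2 (by rw [hVeq']; exact hc)
  obtain ⟨K, hKcpt, hKV, hKZ, hKF, δ, hδ, hKthick⟩ := clopen_piece hf hn hpZ hFfin hFZ hFV
  have hVK : V ⊆ K := by rw [hVeq']; exact hKV
  have hpK : pstar ∈ K := hVK hpV
  have hK1 : ∀ q ∈ K, q.1 = 1 → q = pstar := by
    intro q hq hq1
    by_cases hqV : q ∈ V
    · exact hsingle q ⟨hqV, hq1⟩
    · exact absurd hq (hKF q ⟨⟨hKZ hq, hq1⟩, hqV⟩)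
  -- minimal parameter on K
  have hKne : K.Nonempty := ⟨pstar, hpK⟩
  obtain ⟨q₀, hq₀K, hq₀min⟩ := hKcpt.exists_isMinOn hKne continuous_fst.continuousOn
  set t₀ : ℝ := q₀.1 with ht₀def
  have ht₀pos : 0 < t₀ := by
    rcases ((hKZ hq₀K).1.1).lt_or_eq with h | h
    · exact h
    · exfalso
      have hq0 : q₀ = ((0:ℝ), q₀.2) := by rw [h]
      exact no_t0 hf hn q₀.2 (by rw [← hq0]; exact hKZ hq₀K)
  have hKco : ∀ q ∈ K, t₀ ≤ q.1 ∧ q.1 ≤ 1 ∧ Lb ≤ q.2 ∧ q.2 ≤ Cu := by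
    intro q hq
    exact ⟨hq₀min hq, (hKZ hq).1.2, ((hbox (hKZ hq)).2).1, ((hbox (hKZ hq)).2).2⟩
  -- choose the time grid
  obtain ⟨N, hNgt⟩ := exists_nat_gt (max (3/δ) (3/t₀))
  have hNpos : (0:ℝ) < N :=
    lt_trans (lt_max_iff.mpr (Or.inl (by positivity))) hNgt
  have h3δ : 3 / (N:ℝ) < δ := by
    rw [div_lt_iff₀ hNpos]
    have := (le_max_left (3/δ) (3/t₀)).trans_lt hNgt
    rw [div_lt_iff₀ hδ] at this
    linarith [this]
  have h3t : 3 / (N:ℝ) < t₀ := by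
    rw [div_lt_iff₀ hNpos]
    have := (le_max_right (3/δ) (3/t₀)).trans_lt hNgt
    rw [div_lt_iff₀ ht₀pos] at this
    linarith [this]
  have hNge1 : 1 ≤ N := by
    by_contra h
    push_neg at h
    interval_cases N
    simp at hNpos
  set τ : ℕ → ℝ := fun j => (j:ℝ)/N with hτdef
  have hτ0 : τ 0 = 0 := by simp [hτdef]
  have hτN : τ N = 1 := by
    rw [hτdef]
    field_simp
  have hτmono : ∀ j : ℕ, τ j ≤ τ (j+1) := by
    intro j
    rw [hτdef]
    rw [div_le_div_iff₀ hNpos hNpos]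
    push_cast
    nlinarith [hNpos]
  have hτnn : ∀ j : ℕ, 0 ≤ τ j := by
    intro j
    rw [hτdef]
    positivity
  have hτle1 : ∀ j : ℕ, j ≤ N → τ j ≤ 1 := by
    intro j hj
    rw [hτdef, div_le_one hNpos]
    exact_mod_cast hj
  have hτ01 : ∀ j : ℕ, j ≤ N → τ j ∈ Set.Icc (0:ℝ) 1 := fun j hj => ⟨hτnn j, hτle1 j hj⟩
  have hτgap : ∀ j : ℕ, τ (j+1) - τ j = 1/N := by
    intro j
    rw [hτdef]
    push_cast
    field_simp
    ring
  have hβpos : 0 < 1/(N:ℝ) := by positivity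
  -- the space grid
  set ε : ℝ := min 1 (min (δ/8) (ρ/2)) with hεdef
  have hεpos : 0 < ε := by
    rw [hεdef]
    refine lt_min one_pos (lt_min (by linarith) (by linarith))
  have hε1 : ε ≤ 1 := min_le_left _ _
  have hεδ : ε ≤ δ/8 := le_trans (min_le_right _ _) (min_le_left _ _)
  have hερ : ε ≤ ρ/2 := le_trans (min_le_right _ _) (min_le_right _ _)
  set o : ℝ := Lb - 2*δ - 2 with hodef
  set mhi : ℤ := ⌈(Cu - Lb + 4*δ + 4)/ε⌉ with hmhidef
  have hmhiε : Cu - Lb + 4*δ + 4 ≤ (mhi:ℝ)*ε := by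
    have h1 : (Cu - Lb + 4*δ + 4)/ε ≤ (mhi:ℝ) := Int.le_ceil _
    have h2 := mul_le_mul_of_nonneg_right h1 hεpos.le
    rwa [div_mul_cancel₀ _ (ne_of_gt hεpos)] at h2
  have hwidth : ∀ m : ℤ, Gp o ε (m+1) - Gp o ε m = ε := by
    intro m
    rw [Gp, Gp]
    push_cast
    ring
  -- range control for cells meeting [Lb, Cu]
  have hrange : ∀ m : ℤ, ∀ z : ℝ, Lb ≤ z → z ≤ Cu → Gp o ε m ≤ z → z ≤ Gp o ε (m+1) →
      (1 ≤ m ∧ m + 1 ≤ mhi) := by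
    intro m z hzl hzu h1 h2
    rw [Gp] at h1
    rw [Gp] at h2
    have hcast : ((m+1:ℤ):ℝ) = (m:ℝ)+1 := by push_cast; ring
    rw [hcast] at h2
    constructor
    · by_contra h
      push_neg at h
      have hm0 : (m:ℝ) + 1 ≤ 1 := by
        have : m ≤ 0 := by omega
        have : (m:ℝ) ≤ 0 := by exact_mod_cast this
        linarith
      have hge : 2*δ + 2 ≤ ((m:ℝ)+1)*ε := by
        rw [hodef] at h2
        nlinarith
      rcases le_or_gt ((m:ℝ)+1) 0 with hc | hc
      · nlinarith
      · nlinarith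
    · by_contra h
      push_neg at h
      have hmm : (mhi:ℝ) ≤ (m:ℝ) := by exact_mod_cast (by omega : mhi ≤ m)
      have h3 : (m:ℝ)*ε ≤ Cu - o := by linarith
      have h4 : (mhi:ℝ)*ε ≤ (m:ℝ)*ε := mul_le_mul_of_nonneg_right hmm hεpos.le
      rw [hodef] at h3
      nlinarith
  -- selection of cells per strip
  set Sel : ℕ → ℤ → Prop := fun j m => ∃ q ∈ K,
      q.1 ∈ Set.Icc (τ j - 1/N) (τ (j+1) + 1/N) ∧
      ∃ x ∈ Set.Icc (Gp o ε m) (Gp o ε (m+1)), |x - q.2| ≤ δ/8 with hSeldef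
  set A : ℕ → Finset ℤ := fun j => (Finset.Icc (0:ℤ) mhi).filter (fun m => Sel j m)
    with hAdef
  have hAsub : ∀ j, A j ⊆ Finset.Icc 0 mhi := fun j => Finset.filter_subset _ _
  have hAmem : ∀ j m, m ∈ A j ↔ (m ∈ Finset.Icc (0:ℤ) mhi ∧ Sel j m) := by
    intro j m
    rw [hAdef]
    exact Finset.mem_filter
  -- zeros inside selected cells belong to K
  have hzeroK : ∀ (j : ℕ), j + 1 ≤ N → ∀ t ∈ Set.Icc (τ j) (τ (j+1)), ∀ m : ℤ,
      Sel j m → ∀ x ∈ Set.Icc (Gp o ε m) (Gp o ε (m+1)), Gmap f n t x = 0 →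
      ((t, x) : ℝ × ℝ) ∈ K := by
    intro j hjN t ht m hSel x hxcell hGz
    simp only [hSeldef] at hSel
    obtain ⟨q, hqK, hqt, x', hx'cell, hx'q⟩ := hSel
    have ht01 : t ∈ Set.Icc (0:ℝ) 1 :=
      ⟨le_trans (hτnn j) ht.1, le_trans ht.2 (hτle1 (j+1) hjN)⟩
    apply hKthick (t,x) ⟨ht01, hGz⟩
    refine ⟨q, hqK, ?_⟩
    rw [Prod.dist_eq]
    apply max_le
    · rw [Real.dist_eq, abs_sub_le_iff]
      have hgap := hτgap j
      obtain ⟨hq1, hq2⟩ := hqt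
      obtain ⟨ht1, ht2⟩ := ht
      have h3N : 3/(N:ℝ) = 3*(1/N) := by ring
      rw [h3N] at h3δ
      constructor <;> linarith
    · rw [Real.dist_eq]
      have h1 : |x - x'| ≤ ε := by
        rw [abs_sub_le_iff]
        have hw := hwidth m
        obtain ⟨ha1, ha2⟩ := hxcell
        obtain ⟨hb1, hb2⟩ := hx'cell
        constructor <;> linarith
      calc |x - q.2| ≤ |x - x'| + |x' - q.2| := abs_sub_le x x' q.2
        _ ≤ δ := by linarith
  -- points of K select their cells
  have hKsel : ∀ (j : ℕ) (q : ℝ × ℝ), q ∈ K →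
      q.1 ∈ Set.Icc (τ j - 1/N) (τ (j+1) + 1/N) →
      ∀ m : ℤ, q.2 ∈ Set.Icc (Gp o ε m) (Gp o ε (m+1)) → m ∈ A j := by
    intro j q hqK hqt m hcellm
    have hz := hKco q hqK
    have hrng := hrange m q.2 hz.2.2.1 hz.2.2.2 hcellm.1 hcellm.2
    rw [hAmem]
    refine ⟨Finset.mem_Icc.mpr ⟨by omega, by omega⟩, ?_⟩
    simp only [hSeldef]
    exact ⟨q, hqK, hqt, q.2, hcellm, by rw [sub_self, abs_zero]; linarith⟩
  have hcellk : ∀ k : ℤ, Gp o ε k ∈ Set.Icc (Gp o ε (k-1)) (Gp o ε (k-1+1)) := by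
    intro k
    have h1 : (k-1)+1 = k := by ring
    rw [h1]
    exact ⟨by have := hwidth (k-1); rw [h1] at this; linarith [hεpos], le_refl _⟩
  have hcellk' : ∀ k : ℤ, Gp o ε k ∈ Set.Icc (Gp o ε k) (Gp o ε (k+1)) := by
    intro k
    exact ⟨le_refl _, by have := hwidth k; linarith [hεpos]⟩
  -- F1 : sign sum is constant along a strip
  have hF1 : ∀ j : ℕ, j + 1 ≤ N →
      cellSum (fun x => Gmap f n (τ j) x) o ε (A j)
        = cellSum (fun x => Gmap f n (τ (j+1)) x) o ε (A j) := by
    intro j hjN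
    apply cellSum_eq_of_boundary _ _ o ε mhi (A j) (hAsub j)
    intro k _ hxor
    have hnz : ∀ t ∈ Set.Icc (τ j) (τ (j+1)), Gmap f n t (Gp o ε k) ≠ 0 := by
      intro t ht hG0
      have hsel : Sel j (k-1) ∨ Sel j k := by
        rcases hxor with ⟨hin, _⟩ | ⟨_, hin⟩
        · exact Or.inl ((hAmem j (k-1)).mp hin).2
        · exact Or.inr ((hAmem j k).mp hin).2
      have hKmem : ((t, Gp o ε k) : ℝ × ℝ) ∈ K := by
        rcases hsel with h | h
        · exact hzeroK j hjN t ht (k-1) h (Gp o ε k) (hcellk k) hG0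
        · exact hzeroK j hjN t ht k h (Gp o ε k) (hcellk' k) hG0
      have hqt : t ∈ Set.Icc (τ j - 1/N) (τ (j+1) + 1/N) :=
        ⟨by linarith [ht.1], by linarith [ht.2]⟩
      have hin1 : (k-1) ∈ A j := hKsel j (t, Gp o ε k) hKmem hqt (k-1) (hcellk k)
      have hin2 : k ∈ A j := hKsel j (t, Gp o ε k) hKmem hqt k (hcellk' k)
      rcases hxor with ⟨_, hout⟩ | ⟨hout, _⟩
      · exact hout hin2
      · exact hout hin1
    exact sgn_eq (fun t => Gmap f n t (Gp o ε k)) (hτmono j)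
      ((contG_t hf n (Gp o ε k)).mono
        (Set.Icc_subset_Icc (hτnn j) (hτle1 (j+1) hjN))) hnz
  -- F2 : sign sums agree across a junction
  have hF2 : ∀ j : ℕ, j + 2 ≤ N →
      cellSum (fun x => Gmap f n (τ (j+1)) x) o ε (A j)
        = cellSum (fun x => Gmap f n (τ (j+1)) x) o ε (A (j+1)) := by
    intro j hjN
    have hcontx : Continuous (fun x => Gmap f n (τ (j+1)) x) :=
      contG_xt hf n (hτ01 (j+1) (by omega))
    have hz1 : ∀ m ∈ A j \ (A j ∩ A (j+1)),
        ∀ x ∈ Set.Icc (Gp o ε m) (Gp o ε (m+1)), (fun x => Gmap f n (τ (j+1)) x) x ≠ 0 := by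
      intro m hm x hx hG0
      obtain ⟨hmA, hmnot⟩ := Finset.mem_sdiff.mp hm
      have hKmem := hzeroK j (by omega) (τ (j+1)) ⟨hτmono j, le_refl _⟩ m
        ((hAmem j m).mp hmA).2 x hx hG0
      have hin : m ∈ A (j+1) := hKsel (j+1) (τ (j+1), x) hKmem
        ⟨by simp only []; linarith [hβpos], by simp only []; linarith [hτmono (j+1), hβpos]⟩
        m hx
      exact hmnot (Finset.mem_inter.mpr ⟨hmA, hin⟩)
    have hz2 : ∀ m ∈ A (j+1) \ (A j ∩ A (j+1)),
        ∀ x ∈ Set.Icc (Gp o ε m) (Gp o ε (m+1)), (fun x => Gmap f n (τ (j+1)) x) x ≠ 0 := by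
      intro m hm x hx hG0
      obtain ⟨hmA, hmnot⟩ := Finset.mem_sdiff.mp hm
      have hKmem := hzeroK (j+1) hjN (τ (j+1)) ⟨le_refl _, hτmono (j+1)⟩ m
        ((hAmem (j+1) m).mp hmA).2 x hx hG0
      have hin : m ∈ A j := hKsel j (τ (j+1), x) hKmem
        ⟨by simp only []; linarith [hτmono j, hβpos], by simp only []; linarith [hβpos]⟩
        m hx
      exact hmnot (Finset.mem_inter.mpr ⟨hin, hmA⟩)
    rw [cellSum_eq_of_zerofree hεpos hcontx Finset.inter_subset_left hz1,
      cellSum_eq_of_zerofree hεpos hcontx Finset.inter_subset_right hz2]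
  -- the chain: all sums vanish
  have hchain : ∀ j : ℕ, j + 1 ≤ N →
      cellSum (fun x => Gmap f n (τ (j+1)) x) o ε (A j) = 0 := by
    intro j
    induction j with
    | zero =>
      intro _
      have hA0 : A 0 = ∅ := by
        rw [hAdef]
        rw [Finset.filter_eq_empty_iff]
        intro m _ hSel
        simp only [hSeldef] at hSel
        obtain ⟨q, hqK, hqt, _⟩ := hSel
        have h1 := (hKco q hqK).1
        have h2 := hqt.2
        have hτ1 : τ (0+1) = 1/N := by rw [hτdef]; push_cast; ring
        rw [hτ1] at h2
        have h3N : 3/(N:ℝ) = 3*(1/N) := by ring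
        rw [h3N] at h3t
        linarith
      rw [hA0, cellSum, Finset.sum_empty]
    | succ j ih =>
      intro hjN
      have h1 := hF2 j (by omega)
      have h2 := hF1 (j+1) hjN
      have h3 := ih (by omega)
      rw [← h2, ← h1, h3]
  -- evaluation at t = 1
  have hlast : cellSum (fun x => Gmap f n 1 x) o ε (A (N-1)) = 0 := by
    have h := hchain (N-1) (by omega)
    rwa [show (N-1)+1 = N from by omega, hτN] at h
  set g1 : ℝ → ℝ := fun x => Gmap f n 1 x with hg1def
  have hg1cont : Continuous g1 := contG_x hf n
  set u : ℝ := (xs - o)/ε with hudef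
  have hxso : o + u*ε = xs := by
    rw [hudef]
    field_simp
    ring
  set m2 : ℤ := ⌊u⌋ with hm2def
  set m1 : ℤ := ⌈u⌉ - 1 with hm1def
  have hm1m2 : m1 ≤ m2 := by
    have := Int.ceil_le_floor_add_one u
    omega
  have hBchar : ∀ m : ℤ, (Gp o ε m ≤ xs ∧ xs ≤ Gp o ε (m+1)) ↔ (m1 ≤ m ∧ m ≤ m2) := by
    intro m
    have hcast : ((m+1:ℤ):ℝ) = (m:ℝ)+1 := by push_cast; ring
    rw [Gp, Gp, hcast]
    constructor
    · rintro ⟨h1, h2⟩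
      constructor
      · have hu1 : u ≤ (m:ℝ)+1 := by
          rw [hudef, div_le_iff₀ hεpos]
          linarith
        have hceil : ⌈u⌉ ≤ m+1 := Int.ceil_le.mpr (by exact_mod_cast hu1)
        omega
      · have hu2 : (m:ℝ) ≤ u := by
          rw [hudef, le_div_iff₀ hεpos]
          linarith
        have hfl : m ≤ ⌊u⌋ := Int.le_floor.mpr hu2
        omega
    · rintro ⟨h1, h2⟩
      constructor
      · have hmu : (m:ℝ) ≤ u := by
          have h2' : (m:ℝ) ≤ (⌊u⌋:ℝ) := by exact_mod_cast h2
          exact h2'.trans (Int.floor_le u)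
        rw [hudef, le_div_iff₀ hεpos] at hmu
        linarith
      · have h3 : ⌈u⌉ ≤ m+1 := by omega
        have h4 : u ≤ ((m+1:ℤ):ℝ) := by
          have := Int.ceil_le.mp h3
          exact_mod_cast this
        rw [hcast] at h4
        rw [hudef, div_le_iff₀ hεpos] at h4
        linarith
  have hps1 : pstar.1 ∈ Set.Icc (τ (N-1) - 1/N) (τ ((N-1)+1) + 1/N) := by
    rw [hp1, show (N-1)+1 = N from by omega, hτN]
    exact ⟨by linarith [hτle1 (N-1) (by omega), hβpos], by linarith [hβpos]⟩
  have hBA : ∀ m : ℤ, m1 ≤ m → m ≤ m2 → m ∈ A (N-1) := by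
    intro m h1 h2
    apply hKsel (N-1) pstar hpK hps1 m
    exact (hBchar m).mpr ⟨h1, h2⟩
  have hBsub : Finset.Icc m1 m2 ⊆ A (N-1) := by
    intro m hm
    obtain ⟨h1, h2⟩ := Finset.mem_Icc.mp hm
    exact hBA m h1 h2
  have ht1mem : (1:ℝ) ∈ Set.Icc (τ (N-1)) (τ ((N-1)+1)) := by
    rw [show (N-1)+1 = N from by omega, hτN]
    exact ⟨hτle1 (N-1) (by omega), le_refl _⟩
  have hshrink : cellSum g1 o ε (A (N-1)) = cellSum g1 o ε (Finset.Icc m1 m2) := by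
    apply cellSum_eq_of_zerofree hεpos hg1cont hBsub
    intro m hm x hx hG0
    obtain ⟨hmA, hmnot⟩ := Finset.mem_sdiff.mp hm
    have hKmem := hzeroK (N-1) (by omega) 1 ht1mem m ((hAmem (N-1) m).mp hmA).2 x hx hG0
    have hxeq : ((1:ℝ), x) = pstar := hK1 _ hKmem rfl
    have hxxs : x = xs := by
      rw [hps] at hxeq
      exact (Prod.mk.injEq _ _ _ _).mp hxeq |>.2
    rw [hxxs] at hx
    exact hmnot (Finset.mem_Icc.mpr ((hBchar m).mp ⟨hx.1, hx.2⟩))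
  have hcomp := cellSum_Icc g1 o ε m1 m2 hm1m2
  -- location of the outer gridpoints
  have hGpm1lt : Gp o ε m1 < xs := by
    rw [Gp, ← hxso]
    have hlt : ((m1:ℤ):ℝ) < u := by
      have := Int.ceil_lt_add_one u
      rw [hm1def]
      push_cast
      linarith
    nlinarith
  have hGpm1ge : xs - ρ ≤ Gp o ε m1 := by
    rw [Gp, ← hxso]
    have hge : u - 2 ≤ ((m1:ℤ):ℝ) := by
      have := Int.le_ceil u
      rw [hm1def]
      push_cast
      linarith
    nlinarith
  have hGpm2gt : xs < Gp o ε (m2+1) := by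
    rw [Gp, ← hxso]
    have hlt : u < ((m2+1:ℤ):ℝ) := by
      have := Int.lt_floor_add_one u
      rw [hm2def]
      push_cast
      linarith
    nlinarith
  have hGpm2le : Gp o ε (m2+1) ≤ xs + ρ := by
    rw [Gp, ← hxso]
    have hge : ((m2+1:ℤ):ℝ) ≤ u + 1 := by
      have := Int.floor_le u
      rw [hm2def]
      push_cast
      linarith
    nlinarith
  -- signs at the outer gridpoints agree with the signs at xs ∓ ρ
  have hsgnlo : sgn (g1 (xs - ρ)) = sgn (g1 (Gp o ε m1)) := by
    apply sgn_eq g1 hGpm1ge hg1cont.continuousOn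
    intro y hy h0
    have hyxs : y = xs := hiso y ⟨hy.1, by linarith [hy.2, hGpm1lt]⟩ h0
    linarith [hy.2, hGpm1lt]
  have hsgnhi : sgn (g1 (Gp o ε (m2+1))) = sgn (g1 (xs + ρ)) := by
    apply sgn_eq g1 hGpm2le hg1cont.continuousOn
    intro y hy h0
    have hyxs : y = xs := hiso y ⟨by linarith [hy.1, hGpm2gt], hy.2⟩ h0
    linarith [hy.1, hGpm2gt]
  have h0 : sgn (g1 (Gp o ε (m2+1))) - sgn (g1 (Gp o ε m1)) = 0 := by
    rw [← hcomp, ← hshrink]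
    exact hlast
  have hsgneq : sgn (g1 (xs - ρ)) = sgn (g1 (xs + ρ)) := by
    rw [hsgnlo, ← hsgnhi]
    linarith
  have hnz1 : g1 (xs - ρ) ≠ 0 := by
    intro h
    have h' : Gmap f n 1 (xs - ρ) = 0 := h
    rw [h', zero_mul] at hsign
    exact lt_irrefl 0 hsign
  have hnz2 : g1 (xs + ρ) ≠ 0 := by
    intro h
    have h' : Gmap f n 1 (xs + ρ) = 0 := h
    rw [h', mul_zero] at hsign
    exact lt_irrefl 0 hsign
  have := mul_pos_of_sgn_eq hnz1 hnz2 hsgneq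
  have hsign' : g1 (xs - ρ) * g1 (xs + ρ) < 0 := hsign
  linarith
end

section
/- Let f and g be C¹ unimodal maps, and let p and q be periodic points of f and g respectively such that (i) p and q both have minimal period n, (ii) the orbits of p under f and of q under g do not contain the critical point 0, and (iii) σ(p) = σ(q). Then at least one of the following holds: (a) I(p,f) = I(q,g); (b) the minimal period of I(q,g) is n and I(p,f) = μ(I(q,g)); (c) the minimal period of I(p,f) is n and I(q,g) = μ(I(p,f)). -/
/-- Admissible sequences are functions `ℕ → Bool`, with `false = L`, `true = R`.
`shiftSeq k A` is the `k`-fold shift `S^k A`. -/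
def shiftSeq (k : ℕ) (A : ℕ → Bool) : ℕ → Bool := fun i => A (i + k)

/-- The block `A_0 ⋯ A_{n-1}` is even: it contains an even number of `R`'s. -/
def BlockEven (A : ℕ → Bool) (n : ℕ) : Prop :=
  Even ((Finset.range n).filter fun i => A i = true).card

/-- The order on admissible sequences: `A < B` iff at the first index `n` of
disagreement, either `A_0 ⋯ A_{n-1}` is even and `A n = L < R = B n`, or it is
odd and `A n = R > L = B n`. -/
def SeqLT (A B : ℕ → Bool) : Prop :=
  ∃ n : ℕ, (∀ i < n, A i = B i) ∧ A n ≠ B n ∧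
    ((BlockEven A n ∧ A n = false ∧ B n = true) ∨
     (¬ BlockEven A n ∧ A n = true ∧ B n = false))

def SeqLE (A B : ℕ → Bool) : Prop := SeqLT A B ∨ A = B

/-- `A` is maximal: `S^k A ≤ A` for all `k ≥ 0`. -/
def SeqMaximal (A : ℕ → Bool) : Prop := ∀ k : ℕ, SeqLE (shiftSeq k A) A

/-- `A` is periodic of period `n > 0`. -/
def IsPeriodicSeq (A : ℕ → Bool) (n : ℕ) : Prop := 0 < n ∧ ∀ i, A (i + n) = A i

/-- The minimal period of `A` (and `0` if `A` is not periodic). -/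
noncomputable def minPer (A : ℕ → Bool) : ℕ := sInf {n : ℕ | IsPeriodicSeq A n}

/-- Flip (`L ↔ R`) the symbol of `A` at every position congruent to `n - 1`
modulo `n`. -/
def flipAt (n : ℕ) (A : ℕ → Bool) : ℕ → Bool :=
  fun i => if i % n = n - 1 then !(A i) else A i

/-- The map `μ` on periodic admissible sequences: if `n` is the minimal period of
`A` and `m` (with `0 ≤ m ≤ n-1`) is the unique integer such that `S^m A` is
maximal, then `μ A = S^{n-m} B`, where `B` is obtained from `S^m A` by flipping
the symbol at every position congruent to `n - 1` modulo `n`. -/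
noncomputable def muSeq (A : ℕ → Bool) : ℕ → Bool :=
  shiftSeq (minPer A - sInf {m : ℕ | SeqMaximal (shiftSeq m A)})
    (flipAt (minPer A)
      (shiftSeq (sInf {m : ℕ | SeqMaximal (shiftSeq m A)}) A))

/-- The map `ν`: `ν A = μ A` if `per (μ A) = per A`, and `ν A = S^{per A / 2} A`
otherwise. -/
noncomputable def nuSeq (A : ℕ → Bool) : ℕ → Bool :=
  if minPer (muSeq A) = minPer A then muSeq A else shiftSeq (minPer A / 2) A

open scoped Classical in
/-- The itinerary `I(x, f)` of a point whose orbit avoids `0`: the `i`-th symbol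
is `R` (`true`) if `f^[i] x > 0` and `L` (`false`) if `f^[i] x < 0`. -/
noncomputable def itinerary (f : ℝ → ℝ) (x : ℝ) : ℕ → Bool :=
  fun i => if 0 < f^[i] x then true else false

/-- `p` and `q` (periodic points of minimal period `n` of `f` and `g`
respectively) have the same shuffle `σ(p) = σ(q)`: the orderings of their orbits
agree. -/
def SameShuffle (f g : ℝ → ℝ) (p q : ℝ) (n : ℕ) : Prop :=
  ∀ i j : ℕ, i < n → j < n → (f^[i] p < f^[j] p ↔ g^[i] q < g^[j] q)

-- basic sequence lemmas
lemma shiftSeq_apply (k : ℕ) (A : ℕ → Bool) (i : ℕ) : shiftSeq k A i = A (i + k) := rfl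

lemma shiftSeq_shiftSeq (j k : ℕ) (A : ℕ → Bool) :
    shiftSeq j (shiftSeq k A) = shiftSeq (j + k) A := by
  funext i; simp [shiftSeq, add_assoc]

lemma blockEven_congr {A B : ℕ → Bool} {n : ℕ} (h : ∀ i < n, A i = B i) :
    BlockEven A n ↔ BlockEven B n := by
  unfold BlockEven
  have : ((Finset.range n).filter fun i => A i = true)
      = ((Finset.range n).filter fun i => B i = true) := by
    apply Finset.filter_congr
    intro i hi
    simp only [Finset.mem_range] at hi
    rw [h i hi]
  rw [this]

lemma blockCard_succ (A : ℕ → Bool) (N : ℕ) :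
    ((Finset.range (N+1)).filter fun i => A i = true).card
      = ((Finset.range N).filter fun i => A (i+1) = true).card + (if A 0 = true then 1 else 0) := by
  induction N with
  | zero => simp [Finset.filter_singleton, Finset.range_one]; by_cases h : A 0 = true <;> simp [h]
  | succ N ih =>
    rw [Finset.range_add_one, Finset.filter_insert]
    conv_rhs => rw [Finset.range_add_one, Finset.filter_insert]
    by_cases h : A (N+1) = true
    · rw [if_pos h, if_pos h, Finset.card_insert_of_notMem (by simp), Finset.card_insert_of_notMem (by simp)]
      omega
    · rw [if_neg h, if_neg h, ih]

lemma blockEven_succ (A : ℕ → Bool) (N : ℕ) :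
    BlockEven A (N+1) ↔ (BlockEven (shiftSeq 1 A) N ↔ A 0 = false) := by
  unfold BlockEven
  rw [blockCard_succ]
  have : ((Finset.range N).filter fun i => A (i+1) = true)
      = ((Finset.range N).filter fun i => shiftSeq 1 A i = true) := rfl
  rw [this]
  by_cases h : A 0 = true
  · simp [h, Nat.even_add_one, parity_simps]
  · simp at h
    simp [h]
lemma seqLT_trichotomy {A B : ℕ → Bool} (h : A ≠ B) : SeqLT A B ∨ SeqLT B A := by
  have hex : ∃ n, A n ≠ B n := by
    by_contra hc
    push_neg at hc
    exact h (funext hc)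
  classical
  set N := Nat.find hex with hN
  have hne : A N ≠ B N := Nat.find_spec hex
  have hlt : ∀ i < N, A i = B i := fun i hi => by
    by_contra hc; exact absurd (Nat.find_min' hex hc) (by omega)
  have hBE : BlockEven A N ↔ BlockEven B N := blockEven_congr hlt
  by_cases he : BlockEven A N
  · cases hA : A N with
    | false =>
      left
      exact ⟨N, hlt, hne, Or.inl ⟨he, hA, by revert hne; cases B N <;> simp [hA]⟩⟩
    | true =>
      right
      refine ⟨N, fun i hi => (hlt i hi).symm, fun hc => hne hc.symm, Or.inl ⟨hBE.1 he, ?_, hA⟩⟩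
      revert hne; cases B N <;> simp [hA]
  · cases hA : A N with
    | true =>
      left
      exact ⟨N, hlt, hne, Or.inr ⟨he, hA, by revert hne; cases B N <;> simp [hA]⟩⟩
    | false =>
      right
      refine ⟨N, fun i hi => (hlt i hi).symm, fun hc => hne hc.symm,
        Or.inr ⟨fun hb => he (hBE.2 hb), ?_, hA⟩⟩
      revert hne; cases B N <;> simp [hA]

lemma seqLT_asymm {A B : ℕ → Bool} (h1 : SeqLT A B) (h2 : SeqLT B A) : False := by
  obtain ⟨n1, hlt1, hne1, hd1⟩ := h1
  obtain ⟨n2, hlt2, hne2, hd2⟩ := h2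
  have hnn : n1 = n2 := by
    rcases Nat.lt_trichotomy n1 n2 with h | h | h
    · exact absurd (hlt2 n1 h).symm hne1
    · exact h
    · exact absurd (hlt1 n2 h) (fun hc => hne2 hc.symm)
  subst hnn
  have hBE : BlockEven A n1 ↔ BlockEven B n1 := blockEven_congr hlt1
  rcases hd1 with ⟨he1, ha1, hb1⟩ | ⟨he1, ha1, hb1⟩ <;>
    rcases hd2 with ⟨he2, ha2, hb2⟩ | ⟨he2, ha2, hb2⟩
  · rw [hb1] at ha2; exact absurd ha2 (by simp)
  · exact he2 (hBE.1 he1)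
  · exact he1 (hBE.2 he2)
  · rw [hb1] at ha2; exact absurd ha2 (by simp)

lemma seqLE_antisymm {A B : ℕ → Bool} (h1 : SeqLE A B) (h2 : SeqLE B A) : A = B := by
  rcases h1 with h1 | h1
  · rcases h2 with h2 | h2
    · exact absurd h2 (fun h => seqLT_asymm h1 h)
    · exact h2.symm
  · exact h1
lemma Unimodal.strictMonoOn {f : ℝ → ℝ} (hf : Unimodal f) :
    StrictMonoOn f (Set.Iic 0) := by
  apply strictMonoOn_of_deriv_pos (convex_Iic 0) hf.1.continuous.continuousOn
  intro x hx
  rw [interior_Iic] at hx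
  exact hf.2.1 x hx

lemma Unimodal.strictAntiOn {f : ℝ → ℝ} (hf : Unimodal f) :
    StrictAntiOn f (Set.Ici 0) := by
  apply strictAntiOn_of_deriv_neg (convex_Ici 0) hf.1.continuous.continuousOn
  intro x hx
  rw [interior_Ici] at hx
  exact hf.2.2.1 x hx

lemma itinerary_shift (f : ℝ → ℝ) (x : ℝ) (k : ℕ) :
    shiftSeq k (itinerary f x) = itinerary f (f^[k] x) := by
  funext i
  simp only [shiftSeq, itinerary]
  rw [Function.iterate_add_apply]

lemma itinerary_false {f : ℝ → ℝ} {x : ℝ} {i : ℕ} (hx : f^[i] x ≠ 0)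
    (h : itinerary f x i = false) : f^[i] x < 0 := by
  simp only [itinerary, if_neg, ite_eq_right_iff] at h
  rcases lt_trichotomy (f^[i] x) 0 with h' | h' | h'
  · exact h'
  · exact absurd h' hx
  · simp [h'] at h

lemma itinerary_true {f : ℝ → ℝ} {x : ℝ} {i : ℕ} (h : itinerary f x i = true) :
    0 < f^[i] x := by
  simp only [itinerary, ite_eq_left_iff] at h
  by_contra h'
  simp [h'] at h

/-- the key order lemma: if itineraries satisfy SeqLT then points are ordered. -/
lemma itin_lt {f : ℝ → ℝ} (hf : Unimodal f) :
    ∀ N : ℕ, ∀ a b : ℝ, (∀ i, f^[i] a ≠ 0) → (∀ i, f^[i] b ≠ 0) →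
    (∀ i < N, itinerary f a i = itinerary f b i) →
    itinerary f a N ≠ itinerary f b N →
    ((BlockEven (itinerary f a) N ∧ itinerary f a N = false ∧ itinerary f b N = true) ∨
     (¬ BlockEven (itinerary f a) N ∧ itinerary f a N = true ∧ itinerary f b N = false)) →
    a < b := by
  intro N
  induction N with
  | zero =>
    intro a b ha hb _ hne hd
    rcases hd with ⟨_, hA, hB⟩ | ⟨he, _, _⟩
    · have h1 : f^[0] a < 0 := itinerary_false (ha 0) hA
      have h2 : 0 < f^[0] b := itinerary_true hB
      simp only [Function.iterate_zero_apply] at h1 h2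
      linarith
    · exact absurd (by simp [BlockEven]) he
  | succ N ih =>
    intro a b ha hb hagree hne hd
    set A := itinerary f a with hA
    set B := itinerary f b with hB
    have h0 : A 0 = B 0 := hagree 0 (Nat.succ_pos N)
    have ha' : ∀ i, f^[i] (f a) ≠ 0 := fun i => by
      rw [← Function.iterate_succ_apply]; exact ha (i+1)
    have hb' : ∀ i, f^[i] (f b) ≠ 0 := fun i => by
      rw [← Function.iterate_succ_apply]; exact hb (i+1)
    have hSA : shiftSeq 1 A = itinerary f (f a) := by
      rw [hA, itinerary_shift]; simp
    have hSB : shiftSeq 1 B = itinerary f (f b) := by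
      rw [hB, itinerary_shift]; simp
    have hagree' : ∀ i < N, itinerary f (f a) i = itinerary f (f b) i := by
      intro i hi
      rw [← hSA, ← hSB]
      exact hagree (i+1) (by omega)
    have hne' : itinerary f (f a) N ≠ itinerary f (f b) N := by
      rw [← hSA, ← hSB]; exact hne
    have hEsucc := blockEven_succ A N
    have hBEshift : BlockEven (shiftSeq 1 A) N ↔ BlockEven (itinerary f (f a)) N := by
      rw [hSA]
    have hBEshiftB : BlockEven (shiftSeq 1 B) N ↔ BlockEven (itinerary f (f b)) N := by
      rw [hSB]
    have hBEab : BlockEven (itinerary f (f a)) N ↔ BlockEven (itinerary f (f b)) N :=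
      blockEven_congr hagree'
    cases h00 : A 0 with
    | false =>
      -- both negative, f increasing on negatives
      have hxa : a < 0 := by
        have := itinerary_false (ha 0) (by rw [← hA]; exact h00)
        simpa using this
      have hxb : b < 0 := by
        have := itinerary_false (hb 0) (by rw [← hB, ← h0]; exact h00)
        simpa using this
      have hfab : f a < f b := by
        apply ih (f a) (f b) ha' hb' hagree' hne'
        have hpar : BlockEven A (N+1) ↔ BlockEven (shiftSeq 1 A) N := by
          rw [hEsucc]; simp [h00]
        rcases hd with ⟨he, hAv, hBv⟩ | ⟨he, hAv, hBv⟩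
        · left
          refine ⟨hBEshift.1 (hpar.1 he), ?_, ?_⟩
          · rw [← hSA]; exact hAv
          · rw [← hSB]; exact hBv
        · right
          refine ⟨fun hc => he (hpar.2 (hBEshift.2 hc)), ?_, ?_⟩
          · rw [← hSA]; exact hAv
          · rw [← hSB]; exact hBv
      by_contra hc
      push_neg at hc
      rcases eq_or_lt_of_le hc with h | h
      · rw [h] at hfab; exact lt_irrefl _ hfab
      · exact absurd (hf.strictMonoOn (le_of_lt hxb) (le_of_lt hxa) h) (by linarith)
    | true =>
      -- both positive, f decreasing on positives  
      have hxa : 0 < a := by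
        have := itinerary_true (x := a) (i := 0) (by rw [← hA]; exact h00)
        simpa using this
      have hxb : 0 < b := by
        have := itinerary_true (x := b) (i := 0) (by rw [← hB, ← h0]; exact h00)
        simpa using this
      have hfba : f b < f a := by
        apply ih (f b) (f a) hb' ha' (fun i hi => (hagree' i hi).symm)
          (fun hc => hne' hc.symm)
        have hpar : BlockEven A (N+1) ↔ ¬ BlockEven (shiftSeq 1 A) N := by
          rw [hEsucc]; simp [h00]
        have hBEba : BlockEven (itinerary f (f b)) N ↔ BlockEven (shiftSeq 1 A) N := by
          rw [← hBEab, hBEshift]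
        rcases hd with ⟨he, hAv, hBv⟩ | ⟨he, hAv, hBv⟩
        · -- BlockEven A (N+1), A(N+1)=false, B(N+1)=true: shift block odd
          right
          refine ⟨fun hc => (hpar.1 he) (hBEba.1 hc), ?_, ?_⟩
          · rw [← hSB]; exact hBv
          · rw [← hSA]; exact hAv
        · -- odd, A(N+1)=true, B(N+1)=false: shift block even
          left
          have : BlockEven (shiftSeq 1 A) N := by
            by_contra hc
            exact he (hpar.2 hc)
          refine ⟨hBEba.2 this, ?_, ?_⟩
          · rw [← hSB]; exact hBv
          · rw [← hSA]; exact hAv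
      by_contra hc
      push_neg at hc
      rcases eq_or_lt_of_le hc with h | h
      · rw [h] at hfba; exact lt_irrefl _ hfba
      · exact absurd (hf.strictAntiOn (le_of_lt hxb) (le_of_lt hxa) h) (by linarith)

lemma itin_seqLT {f : ℝ → ℝ} (hf : Unimodal f) {a b : ℝ}
    (ha : ∀ i, f^[i] a ≠ 0) (hb : ∀ i, f^[i] b ≠ 0)
    (h : SeqLT (itinerary f a) (itinerary f b)) : a < b := by
  obtain ⟨N, h1, h2, h3⟩ := h
  exact itin_lt hf N a b ha hb h1 h2 h3
lemma period_add_mul {A : ℕ → Bool} {n : ℕ} (h : ∀ i, A (i + n) = A i) :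
    ∀ t i, A (i + n * t) = A i := by
  intro t
  induction t with
  | zero => simp
  | succ t ih =>
    intro i
    have : i + n * (t + 1) = (i + n * t) + n := by ring
    rw [this, h, ih]

lemma mod_shift_eq_self {n i0 c : ℕ} (hi0 : i0 < n) (hc1 : 0 < c) (hc2 : c < 2*n)
    (h : (i0 + c) % n = i0) : c = n := by
  have h1 : (i0 + c) % n = (i0 + 0) % n := by
    rw [h, add_zero, Nat.mod_eq_of_lt hi0]
  have h2 : c % n = 0 % n := Nat.ModEq.add_left_cancel' i0 h1
  have h3 : n ∣ c := by
    rwa [Nat.zero_mod, ← Nat.dvd_iff_mod_eq_zero] at h2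
  rcases h3 with ⟨k, hk⟩
  subst hk
  rcases Nat.lt_or_ge k 1 with hk' | hk'
  · interval_cases k <;> omega
  · rcases Nat.lt_or_ge k 2 with hk'' | hk''
    · interval_cases k <;> omega
    · nlinarith

lemma flip_period_clash {A A' : ℕ → Bool} {n i0 d d' : ℕ} (hi0 : i0 < n)
    (hA : ∀ i, A (i + n) = A i)
    (hrel : ∀ i, A' i = if i % n = i0 then !(A i) else A i)
    (hd : 0 < d) (hdn : d < n) (hdp : ∀ i, A (i + d) = A i)
    (hd' : 0 < d') (hdn' : d' < n) (hdp' : ∀ i, A' (i + d') = A' i) : False := by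
  have hn : 0 < n := lt_trans hd hdn
  -- step 1 : A (i0 + d') = !(A i0)
  have hmod1 : (i0 + d') % n ≠ i0 := fun h =>
    absurd (mod_shift_eq_self hi0 hd' (by omega) h) (by omega)
  have step1 : A (i0 + d') = !(A i0) := by
    have e1 : A' (i0 + d') = A' i0 := hdp' i0
    rw [hrel, hrel, if_neg hmod1, if_pos (Nat.mod_eq_of_lt hi0)] at e1
    exact e1
  -- step 2 : A (i0 + d + d') ≠ A (i0 + d)
  have step2 : A (i0 + d + d') ≠ A (i0 + d) := by
    have e1 : A (i0 + d + d') = A (i0 + d') := by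
      rw [show i0 + d + d' = (i0 + d') + d by ring, hdp]
    rw [e1, hdp i0, step1]
    simp
  -- step 3 : characterization
  have step3 : (i0 + d) % n = i0 ∨ (i0 + d + d') % n = i0 := by
    by_contra hc
    push_neg at hc
    apply step2
    have e1 : A' (i0 + d + d') = A' (i0 + d) := hdp' (i0 + d)
    rw [hrel, hrel, if_neg hc.2, if_neg hc.1] at e1
    exact e1
  rcases step3 with h | h
  · exact absurd (mod_shift_eq_self hi0 hd (by omega) h) (by omega)
  · have hsum : d + d' = n := by
      have := mod_shift_eq_self hi0 (c := d + d') (by omega) (by omega)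
        (by rw [show i0 + (d + d') = i0 + d + d' by ring]; exact h)
      exact this
    -- step 4
    have e1 : A (i0 + d') = A i0 := by
      have : A ((i0 + d') + d) = A (i0 + d') := hdp _
      rw [show (i0 + d') + d = i0 + n by omega, hA] at this
      exact this.symm
    rw [step1] at e1
    simp at e1
lemma flip_cond {n M i : ℕ} (hM : M < n) :
    ((i + (n - M)) % n = n - 1) ↔ (i % n = (M + (n - 1)) % n) := by
  constructor
  · intro h
    have h1 : (i + (n - M) + M) % n = (n - 1 + M) % n := by
      rw [← Nat.mod_add_mod, h]
    rw [show i + (n - M) + M = i + n by omega, Nat.add_mod_right] at h1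
    rw [h1, Nat.add_comm]
  · intro h
    have h1 : (i + (n - M)) % n = (i % n + (n - M)) % n :=
      (Nat.mod_add_mod i n (n - M)).symm
    rw [h, Nat.mod_add_mod,
      show M + (n - 1) + (n - M) = (n - 1) + n by omega, Nat.add_mod_right,
      Nat.mod_eq_of_lt (show n - 1 < n by omega)] at h1
    exact h1

lemma sInf_maximal_eq {A : ℕ → Bool} {n M : ℕ} (hn : 0 < n) (hM : M < n)
    (hper : ∀ i, A (i + n) = A i) (hmin : minPer A = n)
    (hmax : SeqMaximal (shiftSeq M A)) :
    sInf {m : ℕ | SeqMaximal (shiftSeq m A)} = M := by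
  have hne : {m : ℕ | SeqMaximal (shiftSeq m A)}.Nonempty := ⟨M, hmax⟩
  have hmem : sInf {m : ℕ | SeqMaximal (shiftSeq m A)} ∈ _ := Nat.sInf_mem hne
  set m' := sInf {m : ℕ | SeqMaximal (shiftSeq m A)} with hm'
  have hle : m' ≤ M := Nat.sInf_le hmax
  rcases eq_or_lt_of_le hle with h | h
  · exact h
  · exfalso
    have hm'max : SeqMaximal (shiftSeq m' A) := hmem
    have le1 : SeqLE (shiftSeq M A) (shiftSeq m' A) := by
      have := hm'max (M - m')
      rwa [shiftSeq_shiftSeq, show M - m' + m' = M by omega] at this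
    have le2 : SeqLE (shiftSeq m' A) (shiftSeq M A) := by
      have := hmax (n - M + m')
      rw [shiftSeq_shiftSeq, show n - M + m' + M = m' + n by omega] at this
      have hsh : shiftSeq (m' + n) A = shiftSeq m' A := by
        funext i
        show A (i + (m' + n)) = A (i + m')
        rw [show i + (m' + n) = (i + m') + n by ring, hper]
      rwa [hsh] at this
    have heq : shiftSeq m' A = shiftSeq M A := seqLE_antisymm le2 le1
    have hc : ∀ i, A (i + M) = A (i + m') := by
      intro i
      have := congrFun heq i
      exact ((by exact this : A (i + m') = A (i + M))).symm
    have hperc : IsPeriodicSeq A (M - m') := by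
      refine ⟨by omega, fun j => ?_⟩
      set t := m' + 1 with ht
      have h1 : A (j + (M - m')) = A (j + (M - m') + n * t) := (period_add_mul hper t _).symm
      have h2 : j + (M - m') + n * t = (j + n * t - m') + M := by
        have : n * t ≥ m' + 1 := by nlinarith
        omega
      have h3 : (j + n * t - m') + m' = j + n * t := by
        have : n * t ≥ m' + 1 := by nlinarith
        omega
      rw [h1, h2, hc, h3, period_add_mul hper]
    have : minPer A ≤ M - m' := Nat.sInf_le hperc
    omega

lemma mu_eq {A : ℕ → Bool} {n M : ℕ} (hn : 0 < n) (hM : M < n)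
    (hper : ∀ i, A (i + n) = A i) (hmin : minPer A = n)
    (hmax : SeqMaximal (shiftSeq M A)) :
    muSeq A = fun i => if i % n = (M + (n - 1)) % n then !(A i) else A i := by
  unfold muSeq
  rw [hmin, sInf_maximal_eq hn hM hper hmin hmax]
  funext i
  show (if (i + (n - M)) % n = n - 1 then !(A (i + (n - M) + M)) else A (i + (n - M) + M))
      = if i % n = (M + (n - 1)) % n then !(A i) else A i
  rw [show i + (n - M) + M = i + n by omega, hper]
  by_cases h : (i + (n - M)) % n = n - 1
  · rw [if_pos h, if_pos ((flip_cond hM).1 h)]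
  · rw [if_neg h, if_neg (fun hc => h ((flip_cond hM).2 hc))]
lemma iterate_fix_mul {α : Type*} {f : α → α} {p : α} {n : ℕ} (hfix : f^[n] p = p) :
    ∀ t, f^[n * t] p = p := by
  intro t
  induction t with
  | zero => simp
  | succ t ih =>
    rw [Nat.mul_succ, Function.iterate_add_apply, hfix, ih]

lemma iterate_mod {α : Type*} {f : α → α} {p : α} {n : ℕ} (hfix : f^[n] p = p) (i : ℕ) :
    f^[i] p = f^[i % n] p := by
  calc f^[i] p = f^[i % n + n * (i / n)] p := by rw [Nat.mod_add_div]
    _ = f^[i % n] (f^[n * (i / n)] p) := Function.iterate_add_apply _ _ _ _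
    _ = f^[i % n] p := by rw [iterate_fix_mul hfix]

lemma itinerary_mod {f : ℝ → ℝ} {p : ℝ} {n : ℕ} (hfix : f^[n] p = p) (i : ℕ) :
    itinerary f p i = itinerary f p (i % n) := by
  unfold itinerary
  rw [iterate_mod hfix i]

lemma itinerary_periodic {f : ℝ → ℝ} {p : ℝ} {n : ℕ} (hfix : f^[n] p = p) (i : ℕ) :
    itinerary f p (i + n) = itinerary f p i := by
  unfold itinerary
  rw [Function.iterate_add_apply, hfix]

lemma orbit_max_closest_pos {f : ℝ → ℝ} {p : ℝ} {n : ℕ} (hf : Unimodal f) (hn : 0 < n)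
    (hfix : f^[n] p = p) {M : ℕ}
    (hmax : ∀ j < n, f^[j] p ≤ f^[M] p) {k : ℕ}
    (hk1 : (k + 1) % n = M) (hkpos : 0 < f^[k] p) :
    ∀ l, 0 < f^[l] p → f^[k] p ≤ f^[l] p := by
  intro l hlpos
  by_contra hc
  push_neg at hc
  have h1 : f (f^[k] p) < f (f^[l] p) :=
    hf.strictAntiOn (le_of_lt hlpos) (le_of_lt hkpos) hc
  have h2 : f (f^[k] p) = f^[M] p := by
    rw [← Function.iterate_succ_apply' f k p, iterate_mod hfix (k+1), hk1]
  have h3 : f (f^[l] p) = f^[(l+1) % n] p := by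
    rw [← Function.iterate_succ_apply' f l p, iterate_mod hfix (l+1)]
  rw [h2, h3] at h1
  exact absurd (hmax _ (Nat.mod_lt _ hn)) (not_le.2 h1)

lemma orbit_max_closest_neg {f : ℝ → ℝ} {p : ℝ} {n : ℕ} (hf : Unimodal f) (hn : 0 < n)
    (hfix : f^[n] p = p) {M : ℕ}
    (hmax : ∀ j < n, f^[j] p ≤ f^[M] p) {k : ℕ}
    (hk1 : (k + 1) % n = M) (hkneg : f^[k] p < 0) :
    ∀ l, f^[l] p < 0 → f^[l] p ≤ f^[k] p := by
  intro l hlneg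
  by_contra hc
  push_neg at hc
  have h1 : f (f^[k] p) < f (f^[l] p) :=
    hf.strictMonoOn (le_of_lt hkneg) (le_of_lt hlneg) hc
  have h2 : f (f^[k] p) = f^[M] p := by
    rw [← Function.iterate_succ_apply' f k p, iterate_mod hfix (k+1), hk1]
  have h3 : f (f^[l] p) = f^[(l+1) % n] p := by
    rw [← Function.iterate_succ_apply' f l p, iterate_mod hfix (l+1)]
  rw [h2, h3] at h1
  exact absurd (hmax _ (Nat.mod_lt _ hn)) (not_le.2 h1)

lemma shift_max {f : ℝ → ℝ} {p : ℝ} {n : ℕ} (hf : Unimodal f) (hn : 0 < n)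
    (hfix : f^[n] p = p) (hpc : ∀ i, f^[i] p ≠ 0) {M : ℕ}
    (hmax : ∀ j < n, f^[j] p ≤ f^[M] p) :
    SeqMaximal (shiftSeq M (itinerary f p)) := by
  intro k
  set u := (k + M) % n with hu
  have h1 : shiftSeq k (shiftSeq M (itinerary f p)) = itinerary f (f^[u] p) := by
    rw [shiftSeq_shiftSeq, itinerary_shift, iterate_mod hfix (k + M)]
  have h2 : shiftSeq M (itinerary f p) = itinerary f (f^[M] p) := itinerary_shift f p M
  rw [h1, h2]
  by_cases heq : itinerary f (f^[u] p) = itinerary f (f^[M] p)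
  · exact Or.inr heq
  · rcases seqLT_trichotomy heq with h | h
    · exact Or.inl h
    · exfalso
      have hnz1 : ∀ i, f^[i] (f^[M] p) ≠ 0 := fun i => by
        rw [← Function.iterate_add_apply]; exact hpc _
      have hnz2 : ∀ i, f^[i] (f^[u] p) ≠ 0 := fun i => by
        rw [← Function.iterate_add_apply]; exact hpc _
      have := itin_seqLT hf hnz1 hnz2 h
      exact absurd (hmax u (Nat.mod_lt _ hn)) (not_le.2 this)
lemma step_pos {f : ℝ → ℝ} {p : ℝ} {n : ℕ} (hf : Unimodal f) (hfix : f^[n] p = p)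
    {i j : ℕ} (hi : 0 < f^[i] p) (hij : f^[i] p < f^[j] p) :
    f^[(j+1) % n] p < f^[(i+1) % n] p := by
  have h := hf.strictAntiOn (le_of_lt hi) (le_of_lt (lt_trans hi hij)) hij
  rwa [← Function.iterate_succ_apply' f i p, ← Function.iterate_succ_apply' f j p,
    iterate_mod hfix (i+1), iterate_mod hfix (j+1)] at h

lemma step_neg {f : ℝ → ℝ} {p : ℝ} {n : ℕ} (hf : Unimodal f) (hfix : f^[n] p = p)
    {i j : ℕ} (hj : f^[j] p < 0) (hij : f^[i] p < f^[j] p) :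
    f^[(i+1) % n] p < f^[(j+1) % n] p := by
  have h := hf.strictMonoOn (le_of_lt (lt_trans hij hj)) (le_of_lt hj) hij
  rwa [← Function.iterate_succ_apply' f i p, ← Function.iterate_succ_apply' f j p,
    iterate_mod hfix (i+1), iterate_mod hfix (j+1)] at h

/-- at most one index of disagreement between the two itineraries,
assuming `f^[i] p < f^[j] p`. -/
lemma diff_unique_aux {f g : ℝ → ℝ} {p q : ℝ} {n : ℕ} (hf : Unimodal f) (hg : Unimodal g)
    (hfix : f^[n] p = p) (hgfix : g^[n] q = q)
    (hpc : ∀ i : ℕ, f^[i] p ≠ 0) (hqc : ∀ i : ℕ, g^[i] q ≠ 0)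
    (hσ : SameShuffle f g p q n)
    {i j : ℕ} (hi : i < n) (hj : j < n)
    (hij : f^[i] p < f^[j] p)
    (hdi : itinerary f p i ≠ itinerary g q i)
    (hdj : itinerary f p j ≠ itinerary g q j) : False := by
  have hn : 0 < n := lt_of_le_of_lt (Nat.zero_le i) hi
  have hyij : g^[i] q < g^[j] q := (hσ i j hi hj).1 hij
  have hi' : (i+1) % n < n := Nat.mod_lt _ hn
  have hj' : (j+1) % n < n := Nat.mod_lt _ hn
  cases hFi : itinerary f p i with
  | true =>
    have hxi : 0 < f^[i] p := itinerary_true hFi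
    have hxj : 0 < f^[j] p := lt_trans hxi hij
    have hGi : itinerary g q i = false := by
      revert hdi; rw [hFi]; cases itinerary g q i <;> simp
    have hyi : g^[i] q < 0 := itinerary_false (hqc i) hGi
    have hyj : g^[j] q < 0 := by
      have hGj : itinerary g q j = false := by
        have hFj : itinerary f p j = true := by
          unfold itinerary; rw [if_pos hxj]
        revert hdj; rw [hFj]; cases itinerary g q j <;> simp
      exact itinerary_false (hqc j) hGj
    have hx' : f^[(j+1) % n] p < f^[(i+1) % n] p := step_pos hf hfix hxi hij
    have hy' : g^[(i+1) % n] q < g^[(j+1) % n] q := step_neg hg hgfix hyj hyij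
    have := (hσ _ _ hi' hj').2 hy'
    linarith
  | false =>
    have hxi : f^[i] p < 0 := itinerary_false (hpc i) hFi
    have hGi : itinerary g q i = true := by
      revert hdi; rw [hFi]; cases itinerary g q i <;> simp
    have hyi : 0 < g^[i] q := itinerary_true hGi
    have hyj : 0 < g^[j] q := lt_trans hyi hyij
    have hGj : itinerary g q j = true := by
      unfold itinerary; rw [if_pos hyj]
    have hFj : itinerary f p j = false := by
      revert hdj; rw [hGj]; cases itinerary f p j <;> simp
    have hxj : f^[j] p < 0 := itinerary_false (hpc j) hFj
    have hx' : f^[(i+1) % n] p < f^[(j+1) % n] p := step_neg hf hfix hxj hij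
    have hy' : g^[(j+1) % n] q < g^[(i+1) % n] q := step_pos hg hgfix hyi hyij
    have := (hσ _ _ hi' hj').1 hx'
    linarith
/-- Let `f`, `g` be `C¹` unimodal maps and `p`, `q` periodic points
of `f`, `g` of minimal period `n` whose orbits avoid the critical point `0` and
which have the same shuffle.  Then `I(p,f) = I(q,g)`, or `per I(q,g) = n` and
`I(p,f) = μ(I(q,g))`, or `per I(p,f) = n` and `I(q,g) = μ(I(p,f))`. -/
theorem stmt12 (f g : ℝ → ℝ) (hf : Unimodal f) (hg : Unimodal g)
    (p q : ℝ) (n : ℕ) (hn : 0 < n)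
    (hp : Function.minimalPeriod f p = n) (hq : Function.minimalPeriod g q = n)
    (hpc : ∀ i : ℕ, f^[i] p ≠ 0) (hqc : ∀ i : ℕ, g^[i] q ≠ 0)
    (hσ : SameShuffle f g p q n) :
    itinerary f p = itinerary g q ∨
    (minPer (itinerary g q) = n ∧ itinerary f p = muSeq (itinerary g q)) ∨
    (minPer (itinerary f p) = n ∧ itinerary g q = muSeq (itinerary f p)) := by
  by_cases heq : itinerary f p = itinerary g q
  · exact Or.inl heq
  right
  have hfixf : f^[n] p = p := by
    have := Function.isPeriodicPt_minimalPeriod f p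
    rwa [hp] at this
  have hfixg : g^[n] q = q := by
    have := Function.isPeriodicPt_minimalPeriod g q
    rwa [hq] at this
  have hperA' : ∀ i, itinerary f p (i + n) = itinerary f p i := itinerary_periodic hfixf
  have hperA : ∀ i, itinerary g q (i + n) = itinerary g q i := itinerary_periodic hfixg
  have hdistf : ∀ i j, i < n → j < n → i ≠ j → f^[i] p ≠ f^[j] p := by
    intro i j h1 h2 h3 hc
    exact h3 (Function.iterate_injOn_Iio_minimalPeriod (by rw [hp]; exact h1)
      (by rw [hp]; exact h2) hc)
  have hdistg : ∀ i j, i < n → j < n → i ≠ j → g^[i] q ≠ g^[j] q := by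
    intro i j h1 h2 h3 hc
    exact h3 (Function.iterate_injOn_Iio_minimalPeriod (by rw [hq]; exact h1)
      (by rw [hq]; exact h2) hc)
  have huniq : ∀ i j, i < n → j < n → itinerary f p i ≠ itinerary g q i →
      itinerary f p j ≠ itinerary g q j → i = j := by
    intro i j h1 h2 d1 d2
    by_contra hne
    rcases lt_trichotomy (f^[i] p) (f^[j] p) with h | h | h
    · exact diff_unique_aux hf hg hfixf hfixg hpc hqc hσ h1 h2 h d1 d2
    · exact hdistf i j h1 h2 hne h
    · exact diff_unique_aux hf hg hfixf hfixg hpc hqc hσ h2 h1 h d2 d1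
  have hex : ∃ i0, i0 < n ∧ itinerary f p i0 ≠ itinerary g q i0 := by
    by_contra hc
    push_neg at hc
    apply heq
    funext i
    rw [itinerary_mod hfixf i, itinerary_mod hfixg i]
    exact hc _ (Nat.mod_lt _ hn)
  obtain ⟨i0, hi0n, hi0d⟩ := hex
  obtain ⟨M, hMmem, hMmax'⟩ := Finset.exists_max_image (Finset.range n)
    (fun j => f^[j] p) ⟨0, Finset.mem_range.2 hn⟩
  rw [Finset.mem_range] at hMmem
  have hMmaxf : ∀ j < n, f^[j] p ≤ f^[M] p := fun j hj => hMmax' j (Finset.mem_range.2 hj)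
  have hMmaxg : ∀ j < n, g^[j] q ≤ g^[M] q := by
    intro j hj
    by_contra hc
    push_neg at hc
    exact absurd ((hσ M j hMmem hj).2 hc) (not_lt.2 (hMmaxf j hj))
  have hkn : (M + (n - 1)) % n < n := Nat.mod_lt _ hn
  have hk1 : ((M + (n - 1)) % n + 1) % n = M := by
    rw [Nat.mod_add_mod, show M + (n - 1) + 1 = M + n by omega, Nat.add_mod_right,
      Nat.mod_eq_of_lt hMmem]
  have hi0k : i0 = (M + (n - 1)) % n := by
    by_contra hne
    have hkk : itinerary f p ((M + (n - 1)) % n) = itinerary g q ((M + (n - 1)) % n) := by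
      by_contra hd
      exact hne (huniq i0 _ hi0n hkn hi0d hd)
    cases hck : itinerary f p ((M + (n - 1)) % n) with
    | true =>
      have hxk : 0 < f^[(M + (n - 1)) % n] p := itinerary_true hck
      have hyk : 0 < g^[(M + (n - 1)) % n] q := itinerary_true (hkk ▸ hck)
      cases hci : itinerary f p i0 with
      | true =>
        have hxi : 0 < f^[i0] p := itinerary_true hci
        have hGi : itinerary g q i0 = false := by
          revert hi0d; rw [hci]; cases itinerary g q i0 <;> simp
        have hyi : g^[i0] q < 0 := itinerary_false (hqc i0) hGi
        have h1 : f^[(M + (n - 1)) % n] p ≤ f^[i0] p :=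
          orbit_max_closest_pos hf hn hfixf hMmaxf hk1 hxk i0 hxi
        have h2 : f^[(M + (n - 1)) % n] p < f^[i0] p :=
          lt_of_le_of_ne h1 (hdistf _ i0 hkn hi0n (Ne.symm hne))
        have h3 : g^[(M + (n - 1)) % n] q < g^[i0] q := (hσ _ i0 hkn hi0n).1 h2
        linarith
      | false =>
        have hxi : f^[i0] p < 0 := itinerary_false (hpc i0) hci
        have hGi : itinerary g q i0 = true := by
          revert hi0d; rw [hci]; cases itinerary g q i0 <;> simp
        have hyi : 0 < g^[i0] q := itinerary_true hGi
        have h1 : g^[(M + (n - 1)) % n] q ≤ g^[i0] q :=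
          orbit_max_closest_pos hg hn hfixg hMmaxg hk1 hyk i0 hyi
        have h2 : g^[(M + (n - 1)) % n] q < g^[i0] q :=
          lt_of_le_of_ne h1 (hdistg _ i0 hkn hi0n (Ne.symm hne))
        have h3 : f^[(M + (n - 1)) % n] p < f^[i0] p := (hσ _ i0 hkn hi0n).2 h2
        linarith
    | false =>
      have hxk : f^[(M + (n - 1)) % n] p < 0 := itinerary_false (hpc _) hck
      have hyk : g^[(M + (n - 1)) % n] q < 0 := itinerary_false (hqc _) (hkk ▸ hck)
      cases hci : itinerary f p i0 with
      | true =>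
        have hxi : 0 < f^[i0] p := itinerary_true hci
        have hGi : itinerary g q i0 = false := by
          revert hi0d; rw [hci]; cases itinerary g q i0 <;> simp
        have hyi : g^[i0] q < 0 := itinerary_false (hqc i0) hGi
        have h1 : g^[i0] q ≤ g^[(M + (n - 1)) % n] q :=
          orbit_max_closest_neg hg hn hfixg hMmaxg hk1 hyk i0 hyi
        have h2 : g^[i0] q < g^[(M + (n - 1)) % n] q :=
          lt_of_le_of_ne h1 (hdistg i0 _ hi0n hkn hne)
        have h3 : f^[i0] p < f^[(M + (n - 1)) % n] p := (hσ i0 _ hi0n hkn).2 h2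
        linarith
      | false =>
        have hxi : f^[i0] p < 0 := itinerary_false (hpc i0) hci
        have hGi : itinerary g q i0 = true := by
          revert hi0d; rw [hci]; cases itinerary g q i0 <;> simp
        have hyi : 0 < g^[i0] q := itinerary_true hGi
        have h1 : f^[i0] p ≤ f^[(M + (n - 1)) % n] p :=
          orbit_max_closest_neg hf hn hfixf hMmaxf hk1 hxk i0 hxi
        have h2 : f^[i0] p < f^[(M + (n - 1)) % n] p :=
          lt_of_le_of_ne h1 (hdistf i0 _ hi0n hkn hne)
        have h3 : g^[i0] q < g^[(M + (n - 1)) % n] q := (hσ i0 _ hi0n hkn).1 h2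
        linarith
  have hrel : ∀ i, itinerary f p i =
      if i % n = i0 then !(itinerary g q i) else itinerary g q i := by
    intro i
    rw [itinerary_mod hfixf i, itinerary_mod hfixg i]
    by_cases hc : i % n = i0
    · rw [if_pos hc, hc]
      revert hi0d; cases itinerary f p i0 <;> cases itinerary g q i0 <;> simp
    · rw [if_neg hc]
      by_contra hd
      exact hc (huniq (i % n) i0 (Nat.mod_lt _ hn) hi0n hd hi0d)
  have hrel' : ∀ i, itinerary g q i =
      if i % n = i0 then !(itinerary f p i) else itinerary f p i := by
    intro i
    by_cases hc : i % n = i0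
    · rw [if_pos hc, hrel i, if_pos hc, Bool.not_not]
    · rw [if_neg hc, hrel i, if_neg hc]
  have hmaxA' : SeqMaximal (shiftSeq M (itinerary f p)) := shift_max hf hn hfixf hpc hMmaxf
  have hmaxA : SeqMaximal (shiftSeq M (itinerary g q)) := shift_max hg hn hfixg hqc hMmaxg
  have hAper : IsPeriodicSeq (itinerary g q) n := ⟨hn, hperA⟩
  have hA'per : IsPeriodicSeq (itinerary f p) n := ⟨hn, hperA'⟩
  have hAne : {m : ℕ | IsPeriodicSeq (itinerary g q) m}.Nonempty := ⟨n, hAper⟩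
  have hA'ne : {m : ℕ | IsPeriodicSeq (itinerary f p) m}.Nonempty := ⟨n, hA'per⟩
  have hAmem : IsPeriodicSeq (itinerary g q) (minPer (itinerary g q)) :=
    Nat.sInf_mem hAne
  have hA'mem : IsPeriodicSeq (itinerary f p) (minPer (itinerary f p)) :=
    Nat.sInf_mem hA'ne
  have hAle : minPer (itinerary g q) ≤ n := Nat.sInf_le hAper
  have hA'le : minPer (itinerary f p) ≤ n := Nat.sInf_le hA'per
  have hdich : minPer (itinerary g q) = n ∨ minPer (itinerary f p) = n := by
    by_contra hc
    push_neg at hc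
    exact flip_period_clash hi0n hperA hrel hAmem.1 (lt_of_le_of_ne hAle hc.1) hAmem.2
      hA'mem.1 (lt_of_le_of_ne hA'le hc.2) hA'mem.2
  rcases hdich with h | h
  · left
    refine ⟨h, ?_⟩
    rw [mu_eq hn hMmem hperA h hmaxA]
    funext i
    rw [hrel i, hi0k]
  · right
    refine ⟨h, ?_⟩
    rw [mu_eq hn hMmem hperA' h hmaxA']
    funext i
    rw [hrel' i, hi0k]
end
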